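/- arXiv:2205.03243 — 3 statements merged into one kernel-verified Lean document; each statement's English description precedes it below -/
import Mathlib

section
/- Let S be a deterministic Streett automaton with k Streett pairs and let A(S) be the alternating Büchi automaton constructed from S. If the run of S on an ω-word w satisfies the Streett acceptance condition of S, then there exists an accepting run tree of A(S) on w (i.e., w ∈ L(A(S))). -/
open scoped ENNReal

set_option maxHeartbeats 1000000

namespace GFM

/-- The set of elements occurring infinitely often in a sequence. -/
def InfOcc {Q : Type*} (ρ : ℕ → Q) : Set Q := {q | ∀ n : ℕ, ∃ m : ℕ, n ≤ m ∧ ρ m = q}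

/-! ### Deterministic Streett automata -/

/-- A deterministic Streett automaton with `k` Streett pairs over alphabet `Alph`. -/
structure DSA (Alph : Type) (k : ℕ) where
  Q : Type
  [finQ : Fintype Q]
  [decQ : DecidableEq Q]
  init : Q
  next : Q → Alph → Q
  G : Fin k → Set Q
  R : Fin k → Set Q
  disjGR : ∀ i, G i ∩ R i = ∅

attribute [instance] DSA.finQ DSA.decQ

variable {Alph : Type} {k : ℕ}

/-- The (unique) run of a deterministic Streett automaton on an ω-word. -/
def DSA.run (S : DSA Alph k) (w : ℕ → Alph) : ℕ → S.Q
  | 0 => S.init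
  | n + 1 => S.next (DSA.run S w n) (w n)

/-- Streett acceptance: for every pair, finitely many red states or infinitely many
green states. -/
def DSA.Accepts (S : DSA Alph k) (w : ℕ → Alph) : Prop :=
  ∀ i : Fin k, InfOcc (S.run w) ∩ S.R i = ∅ ∨ (InfOcc (S.run w) ∩ S.G i).Nonempty

def DSA.Lang (S : DSA Alph k) : Set (ℕ → Alph) := {w | S.Accepts w}

/-! ### Deterministic Rabin automata -/

structure DRA (Alph : Type) (k : ℕ) where
  Q : Type
  [finQ : Fintype Q]
  [decQ : DecidableEq Q]
  init : Q
  next : Q → Alph → Q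
  R : Fin k → Set Q
  G : Fin k → Set Q

attribute [instance] DRA.finQ DRA.decQ

def DRA.run (D : DRA Alph k) (w : ℕ → Alph) : ℕ → D.Q
  | 0 => D.init
  | n + 1 => D.next (DRA.run D w n) (w n)

/-- Rabin acceptance: some pair has finitely many red states and infinitely many
green states. -/
def DRA.Accepts (D : DRA Alph k) (w : ℕ → Alph) : Prop :=
  ∃ i : Fin k, InfOcc (D.run w) ∩ D.R i = ∅ ∧ (InfOcc (D.run w) ∩ D.G i).Nonempty

def DRA.Lang (D : DRA Alph k) : Set (ℕ → Alph) := {w | D.Accepts w}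

/-! ### Nondeterministic Büchi automata (state-based acceptance) -/

structure NBA (Alph : Type) where
  Q : Type
  [finQ : Fintype Q]
  [decQ : DecidableEq Q]
  init : Q
  next : Q → Alph → Set Q
  F : Set Q

attribute [instance] NBA.finQ NBA.decQ

def NBA.IsRun (B : NBA Alph) (w : ℕ → Alph) (ρ : ℕ → B.Q) : Prop :=
  ρ 0 = B.init ∧ ∀ i : ℕ, ρ (i + 1) ∈ B.next (ρ i) (w i)

def NBA.Accepts (B : NBA Alph) (w : ℕ → Alph) : Prop :=
  ∃ ρ : ℕ → B.Q, B.IsRun w ρ ∧ (InfOcc ρ ∩ B.F).Nonempty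

def NBA.Lang (B : NBA Alph) : Set (ℕ → Alph) := {w | B.Accepts w}

/-! ### Nondeterministic Büchi automata with transition-based acceptance -/

structure NBAt (Alph : Type) where
  Q : Type
  [finQ : Fintype Q]
  [decQ : DecidableEq Q]
  init : Q
  next : Q → Alph → Set Q
  F : Set (Q × Alph × Q)

attribute [instance] NBAt.finQ NBAt.decQ

def NBAt.IsRun (B : NBAt Alph) (w : ℕ → Alph) (ρ : ℕ → B.Q) : Prop :=
  ρ 0 = B.init ∧ ∀ i : ℕ, ρ (i + 1) ∈ B.next (ρ i) (w i)

def NBAt.Accepts (B : NBAt Alph) (w : ℕ → Alph) : Prop :=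
  ∃ ρ : ℕ → B.Q, B.IsRun w ρ ∧ {i : ℕ | (ρ i, w i, ρ (i + 1)) ∈ B.F}.Infinite

/-! ### Alternating Büchi automata -/

/-- An alternating Büchi automaton with transition-based acceptance.  The
(disjoint) sets of nondeterministic and universal states are realized as the two
summands of a sum type. -/
structure ABA (Alph : Type) where
  Qn : Type
  Qu : Type
  [finQn : Fintype Qn]
  [finQu : Fintype Qu]
  [decQn : DecidableEq Qn]
  [decQu : DecidableEq Qu]
  init : Qn ⊕ Qu
  next : (Qn ⊕ Qu) → Alph → Set (Qn ⊕ Qu)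
  F : Set ((Qn ⊕ Qu) × Alph × (Qn ⊕ Qu))

attribute [instance] ABA.finQn ABA.finQu ABA.decQn ABA.decQu

abbrev ABA.State (A : ABA Alph) : Type := A.Qn ⊕ A.Qu

def ABA.IsRun (A : ABA Alph) (w : ℕ → Alph) (ρ : ℕ → A.State) : Prop :=
  ρ 0 = A.init ∧ ∀ i : ℕ, ρ (i + 1) ∈ A.next (ρ i) (w i)

def ABA.RunAccepting (A : ABA Alph) (w : ℕ → Alph) (ρ : ℕ → A.State) : Prop :=
  {i : ℕ | (ρ i, w i, ρ (i + 1)) ∈ A.F}.Infinite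

/-- A run tree of an alternating automaton: a nonempty family of runs closed under
all successor choices at universal states. -/
def ABA.IsRunTree (A : ABA Alph) (w : ℕ → Alph) {J : Type} (ρ : J → ℕ → A.State) : Prop :=
  Nonempty J ∧ (∀ j, A.IsRun w (ρ j)) ∧
    ∀ (j : J) (i : ℕ), (ρ j i).isRight →
      ∀ q' ∈ A.next (ρ j i) (w i),
        ∃ j' : J, (∀ l ≤ i, ρ j' l = ρ j l) ∧ ρ j' (i + 1) = q'

/-- An alternating automaton accepts a word iff it has an accepting run tree on it. -/
def ABA.Accepts (A : ABA Alph) (w : ℕ → Alph) : Prop :=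
  ∃ (J : Type) (ρ : J → ℕ → A.State), A.IsRunTree w ρ ∧ ∀ j, A.RunAccepting w (ρ j)

/-! ### The alternating GFM Büchi automaton constructed from a DSA

Copies `0, …, k` are encoded by `Option (Fin k)`: `none` is the `0`-copy and
`some i` is the copy for the `i`-th Streett pair. -/

abbrev Copy (k : ℕ) : Type := Option (Fin k)

/-- `I_q = {0} ∪ { i | q ∈ R_i }`. -/
def DSA.Iset (S : DSA Alph k) (q : S.Q) : Set (Copy k) :=
  {c | c = none ∨ ∃ i : Fin k, c = some i ∧ q ∈ S.R i}

def DSA.altNext (S : DSA Alph k) :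
    (S.Q ⊕ (S.Q × Copy k)) → Alph → Set (S.Q ⊕ (S.Q × Copy k))
  | Sum.inl q, a => {Sum.inl (S.next q a), Sum.inr (S.next q a, none)}
  | Sum.inr (q, c), a =>
      {x | ∃ c' : Copy k, x = Sum.inr (S.next q a, c') ∧ c' ∈ S.Iset (S.next q a) ∧
            ¬ ∃ i : Fin k, c = some i ∧ S.next q a ∈ S.G i ∧ c' = c}

def DSA.altF (S : DSA Alph k) :
    Set ((S.Q ⊕ (S.Q × Copy k)) × Alph × (S.Q ⊕ (S.Q × Copy k))) :=
  {t | ∃ q c a q' c', t = (Sum.inr (q, c), a, Sum.inr (q', c')) ∧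
        (c ≠ c' ∨ (c = none ∧ c' = none))}

/-- The alternating Büchi automaton `A(S)` constructed from the DSA `S`. -/
def DSA.alt (S : DSA Alph k) : ABA Alph where
  Qn := S.Q
  Qu := S.Q × Copy k
  init := Sum.inl S.init
  next := S.altNext
  F := S.altF

/-- The set of states of `A(S)`. -/
abbrev AltState (S : DSA Alph k) : Type := S.Q ⊕ (S.Q × Copy k)

/-! ### The GFM NBA constructed from a DRA -/

/-- The nondeterministic Büchi automaton `B(R)` constructed from a DRA.
`none` is the rejecting sink `⊥`; `some (q, none)` is state `q` in the `0`-copy and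
`some (q, some i)` is state `q` in the copy of the `i`-th Rabin pair. -/
def DRA.toNBA (D : DRA Alph k) : NBA Alph where
  Q := Option (D.Q × Copy k)
  init := some (D.init, none)
  next := fun x a =>
    match x with
    | none => {none}
    | some (q, none) => {y | ∃ c : Copy k, y = some (D.next q a, c)}
    | some (q, some i) =>
        {y | (q ∈ D.R i ∧ y = none) ∨ (q ∉ D.R i ∧ y = some (D.next q a, some i))}
  F := {y | ∃ q i, y = some (q, some i) ∧ q ∈ D.G i}

/-! ### Finite MDPs, strategies and the induced probability measures -/

/-- A finite MDP with atomic-proposition labels in `Alph`. -/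
structure FinMDP (Alph : Type) where
  S : Type
  [finS : Fintype S]
  [decS : DecidableEq S]
  init : S
  Act : Type
  [finAct : Fintype Act]
  [decAct : DecidableEq Act]
  enabled : S → Finset Act
  enabled_nonempty : ∀ s, (enabled s).Nonempty
  T : S → Act → S → ℝ≥0∞
  T_sum : ∀ s, ∀ a ∈ enabled s, (∑ s' : S, T s a s') = 1
  label : S → Alph

attribute [instance] FinMDP.finS FinMDP.decS FinMDP.finAct FinMDP.decAct

/-- The product σ-algebra on trajectories, each coordinate carrying the discrete
(⊤) σ-algebra. -/
def trajMS (X : Type) : MeasurableSpace (ℕ → X) :=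
  @MeasurableSpace.pi ℕ (fun _ => X) (fun _ => ⊤)

/-- A (history-dependent, randomized) strategy of a finite MDP: it maps the past
run and the current state to a distribution over actions. -/
def MStrat (M : FinMDP Alph) : Type :=
  List (M.S × M.Act) → M.S → M.Act → ℝ≥0∞

def MStratValid (M : FinMDP Alph) (σ : MStrat M) : Prop :=
  ∀ h s, (∑ a ∈ M.enabled s, σ h s a) = 1 ∧ ∀ a ∉ M.enabled s, σ h s a = 0

/-- The probability that a run of the MDP starting in `s0`, controlled by `σ`,
starts with the state-action prefix `r 0, …, r n`. -/
noncomputable def mdpPrefixProb (M : FinMDP Alph) (σ : MStrat M) (s0 : M.S)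
    (r : ℕ → M.S × M.Act) : ℕ → ℝ≥0∞
  | 0 => (if (r 0).1 = s0 then 1 else 0) * σ [] (r 0).1 (r 0).2
  | n + 1 =>
      mdpPrefixProb M σ s0 r n * M.T (r n).1 (r n).2 (r (n + 1)).1 *
        σ ((List.range (n + 1)).map r) (r (n + 1)).1 (r (n + 1)).2

/-- `μ` is the measure on infinite runs induced (via Ionescu–Tulcea) by the
strategy `σ` from initial state `s0`: it is the unique probability measure giving
every cylinder its prefix probability. -/
def IsMDPRunMeasure (M : FinMDP Alph) (σ : MStrat M) (s0 : M.S)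
    (μ : @MeasureTheory.Measure (ℕ → M.S × M.Act) (trajMS (M.S × M.Act))) : Prop :=
  μ Set.univ = 1 ∧
    ∀ (r : ℕ → M.S × M.Act) (n : ℕ),
      μ {r' | ∀ i ≤ n, r' i = r i} = mdpPrefixProb M σ s0 r n

/-- The probability of the event `E` under strategy `σ` from state `s0`. -/
noncomputable def mdpEventProbFrom (M : FinMDP Alph) (σ : MStrat M) (s0 : M.S)
    (E : Set (ℕ → M.S × M.Act)) : ℝ≥0∞ :=
  ⨆ (μ : @MeasureTheory.Measure (ℕ → M.S × M.Act) (trajMS (M.S × M.Act)))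
    (_ : IsMDPRunMeasure M σ s0 μ), μ E

/-- Optimal probability that the label sequence of a run of `M` started in `s0`
belongs to the ω-language `L'`. -/
noncomputable def PSemSatFrom (M : FinMDP Alph) (s0 : M.S) (L' : Set (ℕ → Alph)) : ℝ≥0∞ :=
  ⨆ (σ : MStrat M) (_ : MStratValid M σ),
    mdpEventProbFrom M σ s0 {r | (fun n => M.label (r n).1) ∈ L'}

/-- The semantic satisfaction probability `PSemSat^M_{L'}`. -/
noncomputable def PSemSat (M : FinMDP Alph) (L' : Set (ℕ → Alph)) : ℝ≥0∞ :=
  PSemSatFrom M M.init L'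

/-! ### The product of an MDP with a deterministic Streett automaton

Since the automaton is deterministic, its component in the product is the unique
run of the automaton on the label sequence, and strategies of the product MDP
correspond exactly to strategies of `M`. -/

/-- The value of the Streett MDP `M × S` started in `(s0, q₀)`: the optimal
probability that the automaton component of the run satisfies the Streett
condition. -/
noncomputable def streettProdValFrom (M : FinMDP Alph) (S : DSA Alph k) (s0 : M.S) : ℝ≥0∞ :=
  ⨆ (σ : MStrat M) (_ : MStratValid M σ),
    mdpEventProbFrom M σ s0
      {r | ∀ i : Fin k,
        InfOcc (S.run fun n => M.label (r n).1) ∩ S.R i = ∅ ∨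
        (InfOcc (S.run fun n => M.label (r n).1) ∩ S.G i).Nonempty}

/-- The value `val(M × S)` of the Streett MDP from the initial state. -/
noncomputable def streettProdVal (M : FinMDP Alph) (S : DSA Alph k) : ℝ≥0∞ :=
  streettProdValFrom M S M.init

/-! ### The stochastic Büchi game `M × A(S)`

A play is in a position `(s, x)` with `s` a state of `M` and `x` a state of
`A(S)`.  In every step the acceptance player chooses (jointly, possibly
randomized) an action `a` enabled in `s` together with a successor automaton
state (which is used when `x` is a nondeterministic state); if `x` is a
universal state, the rejection player chooses the successor automaton state.
The next position is `(s', x')` with `s'` sampled from `T(s, a)`.  A play is won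
by the acceptance player iff infinitely many of the automaton transitions taken
are final. -/

abbrev GChoice (M : FinMDP Alph) (S : DSA Alph k) : Type := M.Act × AltState S
abbrev GPos (M : FinMDP Alph) (S : DSA Alph k) : Type := M.S × AltState S
abbrev GHist (M : FinMDP Alph) (S : DSA Alph k) : Type := List (GPos M S × GChoice M S)

/-- A strategy of the acceptance player. -/
def AccStrat (M : FinMDP Alph) (S : DSA Alph k) : Type :=
  GHist M S → GPos M S → GChoice M S → ℝ≥0∞

def AccStratValid (M : FinMDP Alph) (S : DSA Alph k) (σ : AccStrat M S) : Prop :=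
  ∀ h p, (∑ c : GChoice M S, σ h p c) = 1 ∧
    (∀ c : GChoice M S, c.1 ∉ M.enabled p.1 → σ h p c = 0) ∧
    (∀ c : GChoice M S, p.2.isLeft → c.2 ∉ S.altNext p.2 (M.label p.1) → σ h p c = 0)

/-- A strategy of the rejection player (only used at universal states). -/
def RejStrat (M : FinMDP Alph) (S : DSA Alph k) : Type :=
  GHist M S → GPos M S → AltState S → ℝ≥0∞

def RejStratValid (M : FinMDP Alph) (S : DSA Alph k) (π : RejStrat M S) : Prop :=
  ∀ h p, p.2.isRight →
    (∑ x : AltState S, π h p x) = 1 ∧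
    ∀ x : AltState S, x ∉ S.altNext p.2 (M.label p.1) → π h p x = 0

/-- Probability of a finite play prefix in the game `M × A(S)` started at
`(s0, x0)` under the strategy pair `(σ, π)`. -/
noncomputable def gamePrefixProb (M : FinMDP Alph) (S : DSA Alph k)
    (σ : AccStrat M S) (π : RejStrat M S) (s0 : M.S) (x0 : AltState S)
    (r : ℕ → GPos M S × GChoice M S) : ℕ → ℝ≥0∞
  | 0 => (if (r 0).1 = (s0, x0) then 1 else 0) * σ [] (r 0).1 (r 0).2
  | n + 1 =>
      gamePrefixProb M S σ π s0 x0 r n *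
      M.T (r n).1.1 (r n).2.1 (r (n + 1)).1.1 *
      (if (r n).1.2.isLeft then (if (r n).2.2 = (r (n + 1)).1.2 then 1 else 0)
       else π ((List.range n).map r) (r n).1 ((r (n + 1)).1.2)) *
      σ ((List.range (n + 1)).map r) (r (n + 1)).1 (r (n + 1)).2

/-- `μ` is the measure on plays induced (via Ionescu–Tulcea) by the strategy
pair `(σ, π)` from `(s0, x0)`. -/
def IsGameRunMeasure (M : FinMDP Alph) (S : DSA Alph k)
    (σ : AccStrat M S) (π : RejStrat M S) (s0 : M.S) (x0 : AltState S)
    (μ : @MeasureTheory.Measure (ℕ → GPos M S × GChoice M S)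
      (trajMS (GPos M S × GChoice M S))) : Prop :=
  μ Set.univ = 1 ∧
    ∀ (r : ℕ → GPos M S × GChoice M S) (n : ℕ),
      μ {r' | ∀ i ≤ n, r' i = r i} = gamePrefixProb M S σ π s0 x0 r n

/-- The plays won by the acceptance player: infinitely many final transitions of
`A(S)` are taken. -/
def gameWinSet (M : FinMDP Alph) (S : DSA Alph k) : Set (ℕ → GPos M S × GChoice M S) :=
  {r | {i : ℕ | ((r i).1.2, M.label (r i).1.1, (r (i + 1)).1.2) ∈ S.altF}.Infinite}

/-- The value of the stochastic Büchi game `M × A(S)` from position `(s0, x0)`. -/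
noncomputable def gameValFrom (M : FinMDP Alph) (S : DSA Alph k)
    (s0 : M.S) (x0 : AltState S) : ℝ≥0∞ :=
  ⨆ (σ : AccStrat M S) (_ : AccStratValid M S σ),
    ⨅ (π : RejStrat M S) (_ : RejStratValid M S π),
      ⨆ (μ : @MeasureTheory.Measure (ℕ → GPos M S × GChoice M S)
          (trajMS (GPos M S × GChoice M S)))
        (_ : IsGameRunMeasure M S σ π s0 x0 μ),
        μ (gameWinSet M S)

/-- The value `val(M × A(S))` of the stochastic Büchi game from `(s₀, q₀)`. -/
noncomputable def gameVal (M : FinMDP Alph) (S : DSA Alph k) : ℝ≥0∞ :=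
  gameValFrom M S M.init (Sum.inl S.init)

/-! ### The product of an MDP with a nondeterministic Büchi automaton

In the product `M × B` the strategy chooses, at each step, an enabled action of
`M` together with a successor state of `B` (jointly, possibly randomized). -/

abbrev PPos (M : FinMDP Alph) (B : NBA Alph) : Type := M.S × B.Q
abbrev PChoice (M : FinMDP Alph) (B : NBA Alph) : Type := M.Act × B.Q

def ProdStrat (M : FinMDP Alph) (B : NBA Alph) : Type :=
  List (PPos M B × PChoice M B) → PPos M B → PChoice M B → ℝ≥0∞

def ProdStratValid (M : FinMDP Alph) (B : NBA Alph) (σ : ProdStrat M B) : Prop :=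
  ∀ h p, (∑ c : PChoice M B, σ h p c) = 1 ∧
    (∀ c : PChoice M B, c.1 ∉ M.enabled p.1 → σ h p c = 0) ∧
    (∀ c : PChoice M B, c.2 ∉ B.next p.2 (M.label p.1) → σ h p c = 0)

noncomputable def prodPrefixProb (M : FinMDP Alph) (B : NBA Alph)
    (σ : ProdStrat M B) (s0 : M.S) (r : ℕ → PPos M B × PChoice M B) : ℕ → ℝ≥0∞
  | 0 => (if (r 0).1 = (s0, B.init) then 1 else 0) * σ [] (r 0).1 (r 0).2
  | n + 1 =>
      prodPrefixProb M B σ s0 r n *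
      M.T (r n).1.1 (r n).2.1 (r (n + 1)).1.1 *
      (if (r n).2.2 = (r (n + 1)).1.2 then 1 else 0) *
      σ ((List.range (n + 1)).map r) (r (n + 1)).1 (r (n + 1)).2

def IsProdRunMeasure (M : FinMDP Alph) (B : NBA Alph) (σ : ProdStrat M B) (s0 : M.S)
    (μ : @MeasureTheory.Measure (ℕ → PPos M B × PChoice M B)
      (trajMS (PPos M B × PChoice M B))) : Prop :=
  μ Set.univ = 1 ∧
    ∀ (r : ℕ → PPos M B × PChoice M B) (n : ℕ),
      μ {r' | ∀ i ≤ n, r' i = r i} = prodPrefixProb M B σ s0 r n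

noncomputable def prodEventProb (M : FinMDP Alph) (B : NBA Alph) (σ : ProdStrat M B)
    (s0 : M.S) (E : Set (ℕ → PPos M B × PChoice M B)) : ℝ≥0∞ :=
  ⨆ (μ : @MeasureTheory.Measure (ℕ → PPos M B × PChoice M B)
      (trajMS (PPos M B × PChoice M B)))
    (_ : IsProdRunMeasure M B σ s0 μ), μ E

/-- The Büchi objective of the product: the automaton component visits `F`
infinitely often. -/
def prodBuchiSet (M : FinMDP Alph) (B : NBA Alph) : Set (ℕ → PPos M B × PChoice M B) :=
  {r | (InfOcc (fun n => (r n).1.2) ∩ B.F).Nonempty}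

noncomputable def prodBuchiProb (M : FinMDP Alph) (B : NBA Alph) (σ : ProdStrat M B)
    (s0 : M.S) : ℝ≥0∞ :=
  prodEventProb M B σ s0 (prodBuchiSet M B)

/-- The optimal probability of the Büchi objective in `M × B`, started at
`(s0, q₀)`. -/
noncomputable def prodBuchiValFrom (M : FinMDP Alph) (B : NBA Alph) (s0 : M.S) : ℝ≥0∞ :=
  ⨆ (σ : ProdStrat M B) (_ : ProdStratValid M B σ), prodBuchiProb M B σ s0

/-- Probability, under a product strategy, that the label sequence of the run
lies in `L(B)`. -/
noncomputable def prodLangProb (M : FinMDP Alph) (B : NBA Alph) (σ : ProdStrat M B)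
    (s0 : M.S) : ℝ≥0∞ :=
  prodEventProb M B σ s0 {r | (fun n => M.label (r n).1.1) ∈ B.Lang}

/-- A nondeterministic Büchi automaton is good-for-MDPs iff, for every finite
MDP, the optimal Büchi probability in the product equals the semantic
satisfaction probability of its language. -/
def NBA.GFM (B : NBA Alph) : Prop :=
  ∀ M : FinMDP Alph, prodBuchiValFrom M B M.init = PSemSat M B.Lang

/-! ### The augmented MDP `M^ζ`

The augmented MDP is obtained from `M × B` by adding a fresh absorbing sink `t`
(the `Sum.inr` state); every accepting transition (i.e. one whose target
automaton state lies in `F`) leads to the sink with probability `1 − ζ`, and its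
original destinations keep probability multiplied by `ζ`. -/

abbrev AugPos (M : FinMDP Alph) (B : NBA Alph) : Type := (M.S × B.Q) ⊕ Unit

def AugStrat (M : FinMDP Alph) (B : NBA Alph) : Type :=
  List (AugPos M B × PChoice M B) → AugPos M B → PChoice M B → ℝ≥0∞

def AugStratValid (M : FinMDP Alph) (B : NBA Alph) (σ : AugStrat M B) : Prop :=
  ∀ h p, (∑ c : PChoice M B, σ h p c) = 1 ∧
    ∀ s q, p = Sum.inl (s, q) →
      ∀ c : PChoice M B,
        (c.1 ∉ M.enabled s ∨ c.2 ∉ B.next q (M.label s)) → σ h p c = 0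

open Classical in
/-- One-step transition probabilities of the augmented MDP `M^ζ`. -/
noncomputable def augStep (M : FinMDP Alph) (B : NBA Alph) (ζ : ℝ≥0∞)
    (p : AugPos M B) (c : PChoice M B) (p' : AugPos M B) : ℝ≥0∞ :=
  match p, p' with
  | Sum.inl (s, _), Sum.inl (s', q'') =>
      (if c.2 = q'' then 1 else 0) * (if c.2 ∈ B.F then ζ else 1) * M.T s c.1 s'
  | Sum.inl _, Sum.inr _ => if c.2 ∈ B.F then 1 - ζ else 0
  | Sum.inr _, Sum.inr _ => 1
  | Sum.inr _, Sum.inl _ => 0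

noncomputable def augPrefixProb (M : FinMDP Alph) (B : NBA Alph) (ζ : ℝ≥0∞)
    (σ : AugStrat M B) (s0 : M.S) (r : ℕ → AugPos M B × PChoice M B) : ℕ → ℝ≥0∞
  | 0 => (if (r 0).1 = Sum.inl (s0, B.init) then 1 else 0) * σ [] (r 0).1 (r 0).2
  | n + 1 =>
      augPrefixProb M B ζ σ s0 r n *
      augStep M B ζ (r n).1 (r n).2 (r (n + 1)).1 *
      σ ((List.range (n + 1)).map r) (r (n + 1)).1 (r (n + 1)).2

def IsAugRunMeasure (M : FinMDP Alph) (B : NBA Alph) (ζ : ℝ≥0∞) (σ : AugStrat M B)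
    (s0 : M.S)
    (μ : @MeasureTheory.Measure (ℕ → AugPos M B × PChoice M B)
      (trajMS (AugPos M B × PChoice M B))) : Prop :=
  μ Set.univ = 1 ∧
    ∀ (r : ℕ → AugPos M B × PChoice M B) (n : ℕ),
      μ {r' | ∀ i ≤ n, r' i = r i} = augPrefixProb M B ζ σ s0 r n

/-- Probability of eventually reaching the sink `t` in `M^ζ`. -/
noncomputable def augReachProb (M : FinMDP Alph) (B : NBA Alph) (ζ : ℝ≥0∞)
    (σ : AugStrat M B) (s0 : M.S) : ℝ≥0∞ :=
  ⨆ (μ : @MeasureTheory.Measure (ℕ → AugPos M B × PChoice M B)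
      (trajMS (AugPos M B × PChoice M B)))
    (_ : IsAugRunMeasure M B ζ σ s0 μ),
    μ {r | ∃ n : ℕ, (r n).1 = Sum.inr ()}

/-- The optimal probability of reaching the sink `t` in `M^ζ` from `(s0, q₀)`. -/
noncomputable def augReachVal (M : FinMDP Alph) (B : NBA Alph) (ζ : ℝ≥0∞)
    (s0 : M.S) : ℝ≥0∞ :=
  ⨆ (σ : AugStrat M B) (_ : AugStratValid M B σ), augReachProb M B ζ σ s0

/-- The strategy of `M × B` obtained from a strategy of `M^ζ` by restricting it
to the histories that avoid the sink. -/
def AugStrat.restrict (M : FinMDP Alph) (B : NBA Alph) (σ : AugStrat M B) :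
    ProdStrat M B :=
  fun h p c => σ (h.map fun z => (Sum.inl z.1, z.2)) (Sum.inl p) c

/-! ### The product of an MDP with a transition-based NBA (with blocking)

Here the automaton may block (empty successor set); blocked runs enter the
`none` component and are not accepting. -/

abbrev TPos (M : FinMDP Alph) (B : NBAt Alph) : Type := M.S × Option B.Q
abbrev TChoice (M : FinMDP Alph) (B : NBAt Alph) : Type := M.Act × Option B.Q

/-- The successor automaton states the strategy may choose in the product: a
successor from `B.next` if possible, and the blocked state `none` otherwise. -/
def NBAt.allowed (B : NBAt Alph) (ℓ : Alph) (x : Option B.Q) : Set (Option B.Q) :=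
  match x with
  | none => {none}
  | some q => {y | (B.next q ℓ = ∅ ∧ y = none) ∨ ∃ q', q' ∈ B.next q ℓ ∧ y = some q'}

def TStrat (M : FinMDP Alph) (B : NBAt Alph) : Type :=
  List (TPos M B × TChoice M B) → TPos M B → TChoice M B → ℝ≥0∞

def TStratValid (M : FinMDP Alph) (B : NBAt Alph) (σ : TStrat M B) : Prop :=
  ∀ h p, (∑ c : TChoice M B, σ h p c) = 1 ∧
    (∀ c : TChoice M B, c.1 ∉ M.enabled p.1 → σ h p c = 0) ∧
    (∀ c : TChoice M B, c.2 ∉ B.allowed (M.label p.1) p.2 → σ h p c = 0)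

noncomputable def tPrefixProb (M : FinMDP Alph) (B : NBAt Alph)
    (σ : TStrat M B) (s0 : M.S) (r : ℕ → TPos M B × TChoice M B) : ℕ → ℝ≥0∞
  | 0 => (if (r 0).1 = (s0, some B.init) then 1 else 0) * σ [] (r 0).1 (r 0).2
  | n + 1 =>
      tPrefixProb M B σ s0 r n *
      M.T (r n).1.1 (r n).2.1 (r (n + 1)).1.1 *
      (if (r n).2.2 = (r (n + 1)).1.2 then 1 else 0) *
      σ ((List.range (n + 1)).map r) (r (n + 1)).1 (r (n + 1)).2

def IsTRunMeasure (M : FinMDP Alph) (B : NBAt Alph) (σ : TStrat M B) (s0 : M.S)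
    (μ : @MeasureTheory.Measure (ℕ → TPos M B × TChoice M B)
      (trajMS (TPos M B × TChoice M B))) : Prop :=
  μ Set.univ = 1 ∧
    ∀ (r : ℕ → TPos M B × TChoice M B) (n : ℕ),
      μ {r' | ∀ i ≤ n, r' i = r i} = tPrefixProb M B σ s0 r n

/-- Runs of the product that take accepting transitions infinitely often. -/
def tAccSet (M : FinMDP Alph) (B : NBAt Alph) : Set (ℕ → TPos M B × TChoice M B) :=
  {r | {i : ℕ | ∃ q q', (r i).1.2 = some q ∧ (r (i + 1)).1.2 = some q' ∧
        (q, M.label (r i).1.1, q') ∈ B.F}.Infinite}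

/-! ### Auxiliary lemmas for Statement 5 -/

/-- Projection of an `A(S)`-state to the underlying `S`-state. -/
def altProj (St : DSA Alph k) : AltState St → St.Q
  | Sum.inl q => q
  | Sum.inr qc => qc.1

lemma altNext_proj (St : DSA Alph k) {x y : AltState St} {a : Alph}
    (h : y ∈ St.altNext x a) : altProj St y = St.next (altProj St x) a := by
  cases x with
  | inl q =>
    rcases h with h | h <;> subst h <;> rfl
  | inr qc =>
    obtain ⟨q, c⟩ := qc
    obtain ⟨c', rfl, -, -⟩ := h
    rfl

lemma alt_run_proj (St : DSA Alph k) (w : ℕ → Alph) (f : ℕ → AltState St)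
    (hf : (St.alt).IsRun w f) : ∀ n, altProj St (f n) = St.run w n := by
  intro n
  induction n with
  | zero => rw [hf.1]; rfl
  | succ n ih => rw [altNext_proj St (hf.2 n), ih]; rfl

/-- From any universal state one may always move to the `0`-copy. -/
lemma none_step (St : DSA Alph k) (q : St.Q) (c : Copy k) (a : Alph) :
    Sum.inr (St.next q a, none) ∈ St.altNext (Sum.inr (q, c)) a := by
  refine ⟨none, rfl, Or.inl rfl, ?_⟩
  rintro ⟨i, hi, -, hc⟩
  rw [hi] at hc
  cases hc

lemma alt_run_shape (St : DSA Alph k) (w : ℕ → Alph) (f : ℕ → AltState St)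
    (hf : (St.alt).IsRun w f) (n : ℕ) (hr : (f (n + 1)).isRight) :
    ∃ c, f (n + 1) = Sum.inr (St.run w (n + 1), c) := by
  obtain ⟨y, hy⟩ := Sum.isRight_iff.mp hr
  have h := alt_run_proj St w f hf (n + 1)
  rw [hy] at h
  refine ⟨y.2, ?_⟩
  rw [hy, ← h]
  rfl

lemma mem_altF_iff (St : DSA Alph k) (q q' : St.Q) (c c' : Copy k) (a : Alph) :
    ((Sum.inr (q, c) : AltState St), a, (Sum.inr (q', c') : AltState St)) ∈ St.altF ↔
      (c ≠ c' ∨ (c = none ∧ c' = none)) := by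
  constructor
  · rintro ⟨q1, c1, a1, q1', c1', heq, hcond⟩
    obtain ⟨h1, h2, h3⟩ : (Sum.inr (q, c) : AltState St) = Sum.inr (q1, c1) ∧ a = a1 ∧
        (Sum.inr (q', c') : AltState St) = Sum.inr (q1', c1') := by
      refine ⟨congrArg Prod.fst heq, ?_, ?_⟩
      · exact congrArg (fun t => t.2.1) heq
      · exact congrArg (fun t => t.2.2) heq
    obtain ⟨-, rfl⟩ := Prod.mk.injEq _ _ _ _ ▸ Sum.inr.injEq _ _ ▸ h1
    obtain ⟨-, rfl⟩ := Prod.mk.injEq _ _ _ _ ▸ Sum.inr.injEq _ _ ▸ h3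
    exact hcond
  · intro h
    exact ⟨q, c, a, q', c', rfl, h⟩

/-- Every run of `A(S)` that stays in the universal part from step 1 onwards is
accepting, provided the Streett run is accepting. -/
lemma alt_run_accepting (St : DSA Alph k) (w : ℕ → Alph) (hAcc : St.Accepts w)
    (f : ℕ → AltState St) (hf : (St.alt).IsRun w f)
    (hr : ∀ n, (f (n + 1)).isRight) : (St.alt).RunAccepting w f := by
  classical
  choose C hC using fun n => alt_run_shape St w f hf n (hr n)
  by_contra hfin
  unfold ABA.RunAccepting at hfin
  rw [Set.not_infinite] at hfin
  obtain ⟨N, hN⟩ : ∃ N, ∀ n, N ≤ n →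
      (f (n + 1), w (n + 1), f (n + 2)) ∉ (St.alt).F := by
    obtain ⟨N, hN⟩ := hfin.bddAbove
    exact ⟨N, fun n hn hmem => absurd (hN hmem) (by omega)⟩
  -- from non-finality: copies are constant and non-`none` from `N` on
  have step : ∀ n, N ≤ n → C n = C (n + 1) ∧ C n ≠ none := by
    intro n hn
    have h := hN n hn
    rw [hC n, hC (n + 1)] at h
    have h' := (mem_altF_iff St _ _ _ _ _).not.mp h
    push_neg at h'
    obtain ⟨h1, h2⟩ := h'
    refine ⟨h1, fun hnone => ?_⟩
    exact (h2 hnone) (h1 ▸ hnone)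
  obtain ⟨i0, hi0⟩ : ∃ i0 : Fin k, C N = some i0 := by
    rcases h : C N with - | i0
    · exact absurd h (step N le_rfl).2
    · exact ⟨i0, rfl⟩
  have const : ∀ n, N ≤ n → C n = some i0 := by
    intro n hn
    induction n, hn using Nat.le_induction with
    | base => exact hi0
    | succ n hn ih => rw [← (step n hn).1]; exact ih
  -- transition analysis on the tail
  have hRG : ∀ n, N ≤ n → St.run w (n + 2) ∈ St.R i0 ∧ St.run w (n + 2) ∉ St.G i0 := by
    intro n hn
    have htr := hf.2 (n + 1)
    rw [hC n, hC (n + 1)] at htr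
    obtain ⟨c', heq, hIc, hexc⟩ := htr
    have hrun : St.next (St.run w (n + 1)) (w (n + 1)) = St.run w (n + 2) := rfl
    rw [hrun] at heq hIc hexc
    simp only [Sum.inr.injEq, Prod.mk.injEq] at heq
    obtain ⟨-, hc'⟩ := heq
    subst hc'
    constructor
    · rcases hIc with h | ⟨i, hsi, hRi⟩
      · exact absurd (h ▸ const (n + 1) (by omega)) (by simp)
      · have : i = i0 := by
          have := (const (n + 1) (by omega)) ▸ hsi
          exact (Option.some.injEq _ _ ▸ this.symm)
        exact this ▸ hRi
    · intro hG
      exact hexc ⟨i0, const n hn, hG, by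
        rw [const n hn, const (n + 1) (by omega)]⟩
  -- the Streett condition now yields a contradiction
  obtain ⟨q, hq⟩ := Finite.exists_infinite_fiber (St.run w)
  replace hq := Set.infinite_coe_iff.mp hq
  have hqInf : q ∈ InfOcc (St.run w) := by
    intro n
    obtain ⟨m, hm, hlt⟩ := hq.exists_gt n
    exact ⟨m, hlt.le, hm⟩
  rcases hAcc i0 with hemp | ⟨g, hgInf, hgG⟩
  · have hmem : q ∈ InfOcc (St.run w) ∩ St.R i0 := by
      refine ⟨hqInf, ?_⟩
      obtain ⟨m, hm, hxq⟩ := hqInf (N + 2)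
      have := (hRG (m - 2) (by omega)).1
      rw [show m - 2 + 2 = m by omega] at this
      exact hxq ▸ this
    rw [hemp] at hmem
    exact hmem
  · obtain ⟨m, hm, hmq⟩ := hgInf (N + 2)
    have := (hRG (m - 2) (by omega)).2
    rw [show m - 2 + 2 = m by omega] at this
    exact this (hmq ▸ hgG)

/-- If the run of the deterministic Streett automaton `S` on
`w` satisfies the Streett acceptance condition, then there is an accepting run
tree of `A(S)` on `w`. -/
theorem streett_accepts_imp_alt_accepts (Alph : Type) (k : ℕ)
    (St : DSA Alph k) (w : ℕ → Alph) :
    St.Accepts w → (St.alt).Accepts w := by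
  intro hAcc
  classical
  refine ⟨{f : ℕ → (St.alt).State // (St.alt).IsRun w f ∧ ∀ n, (f (n + 1)).isRight},
    fun j => j.1, ⟨?_, fun j => j.2.1, ?_⟩,
    fun j => alt_run_accepting St w hAcc j.1 j.2.1 j.2.2⟩
  · -- nonempty: the canonical run staying in copy `0`
    refine ⟨⟨fun n => match n with
      | 0 => Sum.inl St.init
      | n + 1 => Sum.inr (St.run w (n + 1), none), ⟨rfl, fun i => ?_⟩,
      fun n => rfl⟩⟩
    cases i with
    | zero => exact Or.inr rfl
    | succ n => exact none_step St (St.run w (n + 1)) none (w (n + 1))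
  · -- closure under universal branching
    rintro ⟨f, hf, hfr⟩ i hRight q' hq'
    replace hRight : (f i).isRight := hRight
    replace hq' : q' ∈ St.altNext (f i) (w i) := hq'
    obtain ⟨⟨p, c⟩, hpc⟩ := Sum.isRight_iff.mp hRight
    have hproj : p = St.run w i := by
      have := alt_run_proj St w f hf i
      rw [hpc] at this
      exact this
    have hq'' := hq'
    rw [hpc] at hq''
    obtain ⟨c'', hq'eq, -, -⟩ := hq''
    have hq'eq' : q' = Sum.inr (St.run w (i + 1), c'') := by
      rw [hq'eq, hproj]; rfl
    set f' : ℕ → (St.alt).State := fun n =>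
      if n ≤ i then f n else if n = i + 1 then q'
      else Sum.inr (St.run w n, none) with hf'
    have hf'le : ∀ l, l ≤ i → f' l = f l := fun l hl => by simp [hf', hl]
    have hf'succ : f' (i + 1) = q' := by simp [hf']
    have hf'tail : ∀ n, i + 1 < n → f' n = Sum.inr (St.run w n, none) := by
      intro n hn
      simp only [hf']
      rw [if_neg (by omega), if_neg (by omega)]
      rfl
    have hrun' : (St.alt).IsRun w f' := by
      refine ⟨by rw [hf'le 0 (Nat.zero_le i)]; exact hf.1, fun n => ?_⟩
      rcases lt_trichotomy n i with hn | rfl | hn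
      · rw [hf'le n hn.le, hf'le (n + 1) hn]
        exact hf.2 n
      · rw [hf'le n le_rfl, hf'succ]
        exact hq'
      · rcases Nat.lt_or_ge n (i + 2) with hn1 | hn1
        · have : n = i + 1 := by omega
          subst this
          rw [hf'succ, hf'tail (i + 2) (by omega), hq'eq']
          exact none_step St (St.run w (i + 1)) c'' (w (i + 1))
        · rw [hf'tail n (by omega), hf'tail (n + 1) (by omega)]
          exact none_step St (St.run w n) none (w n)
    have hright' : ∀ n, (f' (n + 1)).isRight := by
      intro n
      rcases Nat.lt_or_ge (n + 1) (i + 1) with hn | hn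
      · rw [hf'le (n + 1) (by omega)]
        exact hfr n
      · rcases Nat.eq_or_lt_of_le hn with hn' | hn'
        · rw [show n + 1 = i + 1 by omega, hf'succ, hq'eq']
          rfl
        · rw [hf'tail (n + 1) (by omega)]
          rfl
    exact ⟨⟨f', hrun', hright'⟩, hf'le, hf'succ⟩

end GFM
end

section
/- The three-state nondeterministic Büchi automaton A_φ over the alphabet {g, b} is not good-for-MDPs. Concretely: (a) A_φ accepts every ω-word over {g, b}, so the semantic satisfaction probability of L(A_φ) in the Markov chain M equals 1; but (b) for every strategy on the product MDP M × A_φ, the probability of taking accepting transitions infinitely often is 0. -/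
open scoped ENNReal

set_option maxHeartbeats 1000000

namespace GFM

variable {Alph : Type} {k : ℕ}

/-- The three states of the automaton `A_φ`. -/
inductive Q3 : Type
  | q0 | q1 | q2
  deriving DecidableEq

instance instFintypeQ3 : Fintype Q3 :=
  ⟨{Q3.q0, Q3.q1, Q3.q2}, fun x => by cases x <;> simp⟩

/-- The NBA `A_φ` (with transition-based acceptance) over the alphabet
`{g, b}`, with `g = true` and `b = false`: it recognises the words with
infinitely many `g`'s or infinitely many `b`'s, i.e. all ω-words. -/
def Aphi : NBAt Bool where
  Q := Q3
  init := Q3.q0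
  next := fun q ℓ =>
    match q with
    | Q3.q0 => {Q3.q1, Q3.q2}
    | Q3.q1 => {x | ℓ = true ∧ x = Q3.q0}
    | Q3.q2 => {x | ℓ = false ∧ x = Q3.q0}
  F := {t | t = (Q3.q1, true, Q3.q0) ∨ t = (Q3.q2, false, Q3.q0)}

/-- The Markov chain `M`: states `s₀ = true` (labeled `g = true`) and
`s₁ = false` (labeled `b = false`), a single action, and each successor chosen
uniformly at random. -/
noncomputable def chainM : FinMDP Bool where
  S := Bool
  init := true
  Act := Unit
  enabled := fun _ => {()}
  enabled_nonempty := fun _ => ⟨(), by simp⟩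
  T := fun _ _ _ => 2⁻¹
  T_sum := by
    intro s a _
    rw [Fintype.sum_bool]
    exact ENNReal.inv_two_add_inv_two
  label := id



/-! ### Auxiliary lemmas for Statement 11 -/

section PartA

lemma aphi_accepts_all (w : ℕ → Bool) : Aphi.Accepts w := by
  classical
  set ρ : ℕ → Q3 := fun i => if i % 2 = 0 then Q3.q0 else (if w i then Q3.q1 else Q3.q2) with hρdef
  have hρ0 : ∀ i, i % 2 = 0 → ρ i = Q3.q0 := fun i h => if_pos h
  have hρ1 : ∀ i, ¬ (i % 2 = 0) → ρ i = if w i then Q3.q1 else Q3.q2 := fun i h => if_neg h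
  refine ⟨ρ, ⟨hρ0 0 rfl, ?_⟩, ?_⟩
  · intro i
    rcases Nat.even_or_odd i with hi | hi
    · have h1 : i % 2 = 0 := Nat.even_iff.mp hi
      have h2 : ¬ ((i+1) % 2 = 0) := by omega
      rw [hρ0 i h1, hρ1 (i+1) h2]
      show _ ∈ ({Q3.q1, Q3.q2} : Set Q3)
      cases w (i+1) <;> simp
    · have h1 : ¬ (i % 2 = 0) := by
        have := Nat.odd_iff.mp hi; omega
      have h2 : (i+1) % 2 = 0 := by
        have := Nat.odd_iff.mp hi; omega
      rw [hρ1 i h1, hρ0 (i+1) h2]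
      cases hw : w i
      · rw [if_neg (by simp [hw])]
        show Q3.q0 ∈ Aphi.next Q3.q2 false
        exact ⟨rfl, rfl⟩
      · rw [if_pos (by simp [hw])]
        show Q3.q0 ∈ Aphi.next Q3.q1 true
        exact ⟨rfl, rfl⟩
  · apply Set.Infinite.mono (s := (fun n : ℕ => 2*n+1) '' Set.univ)
    · rintro i ⟨n, -, rfl⟩
      have h1 : ¬ ((2*n+1) % 2 = 0) := by omega
      have h2 : (2*n+1+1) % 2 = 0 := by omega
      show (ρ (2*n+1), w (2*n+1), ρ (2*n+1+1)) ∈ Aphi.F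
      rw [hρ1 _ h1, hρ0 _ h2]
      cases hw : w (2*n+1)
      · rw [if_neg (by simp [hw])]
        exact Or.inr rfl
      · rw [if_pos (by simp [hw])]
        exact Or.inl rfl
    · apply Set.infinite_of_injective_forall_mem (f := fun n : ℕ => 2*n+1)
      · intro a b hab
        simp only at hab
        omega
      · intro n; exact ⟨n, trivial, rfl⟩

end PartA

section RunMeasure

open MeasureTheory

instance : TopologicalSpace (ZMod 2) := ⊥
instance : DiscreteTopology (ZMod 2) := ⟨rfl⟩
instance : MeasurableSpace (ZMod 2) := ⊤
instance : BorelSpace (ZMod 2) := ⟨borel_eq_top_of_discrete.symm⟩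
instance : SecondCountableTopology (ZMod 2) := by infer_instance
instance : IsTopologicalAddGroup (ZMod 2) where
  continuous_add := continuous_of_discreteTopology
  continuous_neg := continuous_of_discreteTopology

/-- The compact group of binary sequences. -/
abbrev Gsp : Type := ℕ → ZMod 2

/-- The Haar (fair-coin) probability measure on binary sequences. -/
noncomputable def haarG : Measure Gsp :=
  Measure.addHaarMeasure (⊤ : TopologicalSpace.PositiveCompacts Gsp)

instance : haarG.IsAddLeftInvariant := by
  unfold haarG; infer_instance

lemma haarG_univ : haarG Set.univ = 1 := by
  have := Measure.addHaarMeasure_self (K₀ := (⊤ : TopologicalSpace.PositiveCompacts Gsp))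
  rwa [TopologicalSpace.PositiveCompacts.coe_top] at this

/-- Cylinder sets on coordinates `1, …, n`. -/
def Zset (c : ℕ → ZMod 2) (n : ℕ) : Set Gsp := {x | ∀ i, 1 ≤ i → i ≤ n → x i = c i}

lemma Zset_measurable (c : ℕ → ZMod 2) (n : ℕ) : MeasurableSet (Zset c n) := by
  have : Zset c n = ⋂ (i : ℕ) (_ : 1 ≤ i) (_ : i ≤ n), (fun x : Gsp => x i) ⁻¹' {c i} := by
    ext x; simp [Zset]
  rw [this]
  exact MeasurableSet.iInter fun i => MeasurableSet.iInter fun _ =>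
    MeasurableSet.iInter fun _ => measurable_pi_apply i trivial

lemma Zset_invariant (c d : ℕ → ZMod 2) (n : ℕ) : haarG (Zset c n) = haarG (Zset d n) := by
  have key : (fun x : Gsp => (c - d) + x) ⁻¹' (Zset c n) = Zset d n := by
    ext x
    simp only [Set.mem_preimage, Zset, Set.mem_setOf_eq, Pi.add_apply, Pi.sub_apply]
    constructor
    · intro h i h1 h2
      have e := h i h1 h2
      linear_combination e
    · intro h i h1 h2
      rw [h i h1 h2]
      abel
  rw [← key, measure_preimage_add]

/-- Extension of a finite word on `{1,…,n}` to a full binary sequence. -/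
def wext {n : ℕ} (w : Fin n → ZMod 2) : ℕ → ZMod 2 :=
  fun i => if h : 1 ≤ i ∧ i ≤ n then w ⟨i - 1, by omega⟩ else 0

lemma haarG_Zset (c : ℕ → ZMod 2) (n : ℕ) : haarG (Zset c n) = 2⁻¹ ^ n := by
  classical
  have hcover : (Set.univ : Set Gsp) = ⋃ w ∈ (Finset.univ : Finset (Fin n → ZMod 2)),
      Zset (wext w) n := by
    apply Set.eq_of_subset_of_subset
    · intro x _
      refine Set.mem_biUnion (Finset.mem_univ (fun j : Fin n => x (j + 1))) ?_
      intro i h1 h2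
      rw [wext, dif_pos ⟨h1, h2⟩]
      show x i = x (i - 1 + 1)
      congr 1
      omega
    · intro x _; trivial
  have hdisj : Set.PairwiseDisjoint
      ((Finset.univ : Finset (Fin n → ZMod 2)) : Set (Fin n → ZMod 2))
      (fun w => Zset (wext w) n) := by
    intro w _ w' _ hww'
    apply Set.disjoint_left.mpr
    intro x hx hx'
    apply hww'
    funext j
    have e1 := hx (j + 1) (by omega) (by omega)
    have e2 := hx' (j + 1) (by omega) (by omega)
    rw [wext, dif_pos ⟨by omega, by omega⟩] at e1 e2
    have hj : (⟨(j:ℕ) + 1 - 1, by omega⟩ : Fin n) = j := by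
      apply Fin.ext; simp
    rw [hj] at e1 e2
    rw [← e1, ← e2]
  have hsum : (1 : ℝ≥0∞) = ∑ w : Fin n → ZMod 2, haarG (Zset (wext w) n) := by
    rw [← haarG_univ, hcover]
    exact measure_biUnion_finset hdisj (fun w _ => Zset_measurable _ _)
  have hconst : ∀ w : Fin n → ZMod 2, haarG (Zset (wext w) n) = haarG (Zset c n) :=
    fun w => Zset_invariant _ _ _
  rw [Finset.sum_congr rfl (fun w _ => hconst w), Finset.sum_const, Finset.card_univ,
    nsmul_eq_mul] at hsum
  have hcard : (Fintype.card (Fin n → ZMod 2) : ℝ≥0∞) = 2 ^ n := by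
    rw [Fintype.card_fun]
    simp [ZMod.card]
  rw [hcard] at hsum
  have h2n0 : ((2 : ℝ≥0∞) ^ n) ≠ 0 := by positivity
  have h2nt : ((2 : ℝ≥0∞) ^ n) ≠ ⊤ := by
    exact ENNReal.pow_ne_top ENNReal.ofNat_ne_top
  calc haarG (Zset c n) = ((2:ℝ≥0∞)^n)⁻¹ * ((2:ℝ≥0∞)^n * haarG (Zset c n)) := by
        rw [← mul_assoc, ENNReal.inv_mul_cancel h2n0 h2nt, one_mul]
    _ = ((2:ℝ≥0∞)^n)⁻¹ * 1 := by rw [← hsum]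
    _ = 2⁻¹ ^ n := by rw [mul_one, ← ENNReal.inv_pow]

/-- The digits map sending a binary sequence to an MDP trajectory. -/
def digitF : Gsp → (ℕ → chainM.S × chainM.Act) :=
  fun x n => (if n = 0 then true else decide (x n = 1), ())

/-- The everywhere-one strategy for the single-action chain `M`. -/
noncomputable def sigmaStar : MStrat chainM := fun _ _ _ => 1

lemma sigmaStar_valid : MStratValid chainM sigmaStar := by
  intro h s
  constructor
  · simp [sigmaStar, chainM]
  · intro a ha
    exact absurd (Finset.mem_singleton.mpr rfl) ha

lemma mdpPrefix_star (r : ℕ → chainM.S × chainM.Act) (n : ℕ) :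
    mdpPrefixProb chainM sigmaStar chainM.init r n
      = (if (r 0).1 = chainM.init then 1 else 0) * 2⁻¹ ^ n := by
  induction n with
  | zero => simp [mdpPrefixProb, sigmaStar]
  | succ n ih =>
    show mdpPrefixProb chainM sigmaStar chainM.init r n * chainM.T _ _ _ * sigmaStar _ _ _ = _
    rw [ih]
    show _ * 2⁻¹ * 1 = _
    rw [mul_one, pow_succ, mul_assoc]

lemma exists_run_measure :
    ∃ μ : @MeasureTheory.Measure (ℕ → chainM.S × chainM.Act)
      (trajMS (chainM.S × chainM.Act)),
      IsMDPRunMeasure chainM sigmaStar chainM.init μ := by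
  classical
  letI : MeasurableSpace (chainM.S × chainM.Act) := ⊤
  have hmeas : @Measurable Gsp (ℕ → chainM.S × chainM.Act) _ (trajMS (chainM.S × chainM.Act))
      digitF := by
    apply measurable_pi_lambda
    intro n
    have : (fun x : Gsp => digitF x n)
        = (fun z : ZMod 2 => ((if n = 0 then true else decide (z = 1), ()) : chainM.S × chainM.Act))
          ∘ (fun x : Gsp => x n) := by
      funext x; rfl
    rw [this]
    exact Measurable.comp measurable_from_top (measurable_pi_apply n)
  have hcylmeas : ∀ (r : ℕ → chainM.S × chainM.Act) (n : ℕ),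
      MeasurableSet[trajMS (chainM.S × chainM.Act)] {r' | ∀ i ≤ n, r' i = r i} := by
    intro r n
    have : {r' : ℕ → chainM.S × chainM.Act | ∀ i ≤ n, r' i = r i}
        = ⋂ (i : ℕ) (_ : i ≤ n), (fun r' : ℕ → chainM.S × chainM.Act => r' i) ⁻¹' {r i} := by
      ext x; simp
    rw [this]
    exact MeasurableSet.iInter fun i => MeasurableSet.iInter fun _ =>
      measurable_pi_apply i trivial
  refine ⟨Measure.map digitF haarG, ?_, ?_⟩
  · rw [Measure.map_apply hmeas MeasurableSet.univ, Set.preimage_univ, haarG_univ]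
  · intro r n
    rw [Measure.map_apply hmeas (hcylmeas r n), mdpPrefix_star]
    by_cases h0 : (r 0).1 = true
    · have hr0 : r 0 = (true, ()) := by
        cases hr : r 0 with
        | mk a b => rw [hr] at h0; cases b; cases h0; rfl
      have hpre : digitF ⁻¹' {r' | ∀ i ≤ n, r' i = r i}
          = Zset (fun i => if (r i).1 = true then 1 else 0) n := by
        ext x
        simp only [Set.mem_preimage, Set.mem_setOf_eq, Zset]
        constructor
        · intro h i h1 h2
          have e : digitF x i = r i := h i h2
          have hi0 : ¬ (i = 0) := by omega
          have hfst : decide (x i = 1) = (r i).1 := by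
            have := congrArg Prod.fst e
            simp [digitF, hi0] at this
            exact this
          cases hb : (r i).1 with
          | true =>
            rw [hb] at hfst
            rw [if_pos (by rfl)]
            exact of_decide_eq_true hfst
          | false =>
            rw [hb] at hfst
            rw [if_neg (by simp)]
            have hx1 : ¬ (x i = 1) := of_decide_eq_false hfst
            have hall : ∀ z : ZMod 2, ¬ (z = 1) → z = 0 := by decide
            exact hall _ hx1
        · intro h i hi
          show digitF x i = r i
          rcases Nat.eq_zero_or_pos i with rfl | hi0
          · show ((true : Bool), ()) = r 0
            rw [hr0]
          · have e := h i hi0 hi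
            have hfst : decide (x i = 1) = (r i).1 := by
              cases hb : (r i).1 with
              | true =>
                rw [hb] at e
                rw [if_pos (by rfl)] at e
                rw [e]; decide
              | false =>
                rw [hb] at e
                rw [if_neg (by simp)] at e
                rw [e]; decide
            have : digitF x i = ((r i).1, ()) := by
              show (if i = 0 then true else decide (x i = 1), ()) = _
              rw [if_neg (by omega), hfst]
              rfl
            rw [this]
            rfl
      rw [hpre, haarG_Zset, if_pos (by exact h0), one_mul]
    · have hpre : digitF ⁻¹' {r' | ∀ i ≤ n, r' i = r i} = ∅ := by
        ext x
        simp only [Set.mem_preimage, Set.mem_setOf_eq, Set.mem_empty_iff_false, iff_false]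
        intro h
        have e := h 0 (Nat.zero_le n)
        have : (true : Bool) = (r 0).1 := congrArg Prod.fst e
        exact h0 this.symm
      rw [hpre, if_neg (by exact h0), zero_mul, measure_empty]

lemma psemsat_eq_one : PSemSat chainM {w | Aphi.Accepts w} = 1 := by
  have hev : {r : ℕ → chainM.S × chainM.Act |
      (fun n => chainM.label (r n).1) ∈ {w | Aphi.Accepts w}} = Set.univ :=
    Set.eq_univ_of_forall fun r => aphi_accepts_all _
  unfold PSemSat PSemSatFrom mdpEventProbFrom
  rw [hev]
  apply le_antisymm
  · exact iSup_le fun σ => iSup_le fun _ => iSup_le fun μ => iSup_le fun hIs => le_of_eq hIs.1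
  · obtain ⟨μ0, h0⟩ := exists_run_measure
    refine le_iSup_of_le sigmaStar (le_iSup_of_le sigmaStar_valid
      (le_iSup_of_le μ0 (le_iSup_of_le h0 (le_of_eq h0.1.symm))))

end RunMeasure

section PartC

open MeasureTheory

/-- Positions-and-choices of the product `M × A_φ`. -/
abbrev Epc : Type := TPos chainM Aphi × TChoice chainM Aphi

variable (σ : TStrat chainM Aphi)

/-- Prefix probability, abbreviated. -/
noncomputable def PP (r : ℕ → Epc) (n : ℕ) : ℝ≥0∞ :=
  tPrefixProb chainM Aphi σ chainM.init r n

/-- Extend a finite prefix to an infinite sequence. -/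
def extv {n : ℕ} (v : Fin (n+1) → Epc) : ℕ → Epc :=
  fun i => if h : i < n + 1 then v ⟨i, h⟩ else v ⟨0, Nat.succ_pos n⟩

lemma extv_eq {n : ℕ} (v : Fin (n+1) → Epc) {i : ℕ} (h : i ≤ n) :
    extv v i = v ⟨i, by omega⟩ := dif_pos (by omega)

lemma PP_congr {r r' : ℕ → Epc} : ∀ n, (∀ i ≤ n, r i = r' i) → PP σ r n = PP σ r' n := by
  intro n
  induction n with
  | zero =>
    intro h
    show (if (r 0).1 = _ then _ else _) * _ = (if (r' 0).1 = _ then _ else _) * _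
    rw [h 0 le_rfl]
  | succ n ih =>
    intro h
    show PP σ r n * chainM.T _ _ _ * _ * σ ((List.range (n+1)).map r) _ _
      = PP σ r' n * chainM.T _ _ _ * _ * σ ((List.range (n+1)).map r') _ _
    have hmap : (List.range (n+1)).map r = (List.range (n+1)).map r' := by
      apply List.map_congr_left
      intro i hi
      exact h i (by simp at hi; omega)
    rw [ih (fun i hi => h i (by omega)), h n (by omega), h (n+1) le_rfl, hmap]

lemma PP_snoc {n : ℕ} (u : Fin (n+1) → Epc) (e : Epc) :
    PP σ (extv (Fin.snoc u e)) (n+1) =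
      PP σ (extv u) n * (2⁻¹ * ((if (u (Fin.last n)).2.2 = e.1.2 then 1 else 0)
        * σ ((List.range (n+1)).map (extv u)) e.1 e.2)) := by
  have hagree : ∀ i ≤ n, extv (Fin.snoc u e) i = extv u i := by
    intro i hi
    rw [extv_eq (Fin.snoc u e) (show i ≤ n + 1 by omega), extv_eq u hi]
    rw [show (⟨i, by omega⟩ : Fin (n+2)) = Fin.castSucc ⟨i, by omega⟩ from rfl,
      Fin.snoc_castSucc]
  have hlast : extv (Fin.snoc u e) (n+1) = e := by
    rw [extv_eq (Fin.snoc u e) (le_refl (n+1))]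
    rw [show (⟨n+1, by omega⟩ : Fin (n+2)) = Fin.last (n+1) from rfl, Fin.snoc_last]
  have hlast' : extv (Fin.snoc u e) n = u (Fin.last n) := by
    rw [hagree n le_rfl, extv_eq _ le_rfl]
    rfl
  show PP σ (extv (Fin.snoc u e)) n * chainM.T _ _ _ *
      (if (extv (Fin.snoc u e) n).2.2 = (extv (Fin.snoc u e) (n+1)).1.2 then 1 else 0) *
      σ ((List.range (n+1)).map (extv (Fin.snoc u e))) (extv (Fin.snoc u e) (n+1)).1
        (extv (Fin.snoc u e) (n+1)).2 = _
  have hmap : (List.range (n+1)).map (extv (Fin.snoc u e)) = (List.range (n+1)).map (extv u) := by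
    apply List.map_congr_left
    intro i hi
    exact hagree i (by simp at hi; omega)
  rw [PP_congr σ n hagree, hlast, hlast', hmap]
  show _ * 2⁻¹ * _ * _ = _
  ring

lemma sum_snoc {n : ℕ} (g : (Fin (n+2) → Epc) → ℝ≥0∞) :
    ∑ v : Fin (n+2) → Epc, g v = ∑ u : Fin (n+1) → Epc, ∑ e : Epc, g (Fin.snoc u e) := by
  calc ∑ v : Fin (n+2) → Epc, g v
      = ∑ p : Epc × (Fin (n+1) → Epc), g (Fin.snocEquiv (fun _ => Epc) p) :=
        (Equiv.sum_comp (Fin.snocEquiv (fun _ => Epc)) g).symm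
    _ = ∑ e : Epc, ∑ u : Fin (n+1) → Epc, g (Fin.snoc u e) := by
        rw [Fintype.sum_prod_type]
        exact Finset.sum_congr rfl fun x _ => Finset.sum_congr rfl fun u _ =>
          congrArg g (funext fun i => rfl)
    _ = ∑ u : Fin (n+1) → Epc, ∑ e : Epc, g (Fin.snoc u e) := Finset.sum_comm

lemma sum_sigma_le (hσ : TStratValid chainM Aphi σ)
    (h : List (TPos chainM Aphi × TChoice chainM Aphi)) (p : TPos chainM Aphi)
    (f : Option Q3 → ℝ≥0∞) (B : ℝ≥0∞)
    (hB : ∀ y ∈ Aphi.allowed (chainM.label p.1) p.2, f y ≤ B) :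
    ∑ c : TChoice chainM Aphi, σ h p c * f c.2 ≤ B := by
  calc ∑ c : TChoice chainM Aphi, σ h p c * f c.2
      ≤ ∑ c : TChoice chainM Aphi, σ h p c * B := by
        apply Finset.sum_le_sum
        intro c _
        by_cases hc : c.2 ∈ Aphi.allowed (chainM.label p.1) p.2
        · exact mul_le_mul_right (hB _ hc) _
        · rw [(hσ h p).2.2 c hc, zero_mul, zero_mul]
    _ = B := by rw [← Finset.sum_mul, (hσ h p).1, one_mul]

/-- Indicator of being a live automaton state. -/
noncomputable def chi : Option Q3 → ℝ≥0∞ := fun y => if y = none then 0 else 1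

lemma chi_le_one (y : Option Q3) : chi y ≤ 1 := by
  unfold chi; split <;> simp

/-- One-step expected value of `chi` after the next step. -/
noncomputable def Kf : Option Q3 → ℝ≥0∞ := fun y =>
  match y with
  | none => 0
  | some Q3.q0 => 1
  | some Q3.q1 => 2⁻¹
  | some Q3.q2 => 2⁻¹

/-- The one-step transition sum of the product under strategy `σ`. -/
noncomputable def T1 (y : Option Aphi.Q) (h : List (TPos chainM Aphi × TChoice chainM Aphi))
    (f : Option Q3 → ℝ≥0∞) : ℝ≥0∞ :=
  ∑ e : Epc, 2⁻¹ * ((if y = e.1.2 then 1 else 0) * (σ h e.1 e.2 * f e.2.2))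

lemma T1_le (hσ : TStratValid chainM Aphi σ) (y : Option Aphi.Q)
    (h : List (TPos chainM Aphi × TChoice chainM Aphi)) (f : Option Q3 → ℝ≥0∞)
    (g : Bool → ℝ≥0∞)
    (hg : ∀ s : Bool, ∀ z ∈ Aphi.allowed (chainM.label s) y, f z ≤ g s) :
    T1 σ y h f ≤ 2⁻¹ * g true + 2⁻¹ * g false := by
  calc T1 σ y h f
      = ∑ a : TPos chainM Aphi, ∑ b : TChoice chainM Aphi,
          2⁻¹ * ((if y = a.2 then 1 else 0) * (σ h a b * f b.2)) := by
        unfold T1; rw [Fintype.sum_prod_type]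
    _ = ∑ a : TPos chainM Aphi,
          2⁻¹ * ((if y = a.2 then 1 else 0) * ∑ b : TChoice chainM Aphi, σ h a b * f b.2) := by
        apply Finset.sum_congr rfl
        intro a _
        rw [Finset.mul_sum, Finset.mul_sum]
    _ ≤ ∑ a : TPos chainM Aphi, 2⁻¹ * ((if y = a.2 then 1 else 0) * g a.1) := by
        apply Finset.sum_le_sum
        intro a _
        by_cases hy : y = a.2
        · refine mul_le_mul_right (mul_le_mul_right ?_ _) _
          exact sum_sigma_le σ hσ h a f (g a.1)
            (fun z hz => hg a.1 z (by rw [← hy] at hz; exact hz))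
        · rw [if_neg hy]
          simp
    _ = 2⁻¹ * g true + 2⁻¹ * g false := by
        rw [Fintype.sum_prod_type]
        show (∑ s : Bool, ∑ x : Option Aphi.Q, 2⁻¹ * ((if y = x then 1 else 0) * g s)) = _
        have hx : ∀ s : Bool, (∑ x : Option Aphi.Q, 2⁻¹ * ((if y = x then 1 else 0) * g s))
            = 2⁻¹ * g s := by
          intro s
          rw [show (fun x : Option Aphi.Q => 2⁻¹ * ((if y = x then 1 else 0) * g s))
              = (fun x : Option Aphi.Q => if y = x then 2⁻¹ * g s else 0) from
            funext fun x => by by_cases hxy : y = x <;> simp [hxy]]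
          rw [Finset.sum_ite_eq]
          simp
        simp only [hx]
        exact Fintype.sum_bool _

lemma mem_allowed_none (ℓ : Bool) (z : Option Q3) :
    z ∈ Aphi.allowed ℓ none ↔ z = none := Iff.rfl

lemma mem_allowed_q0 (ℓ : Bool) (z : Option Q3) :
    z ∈ Aphi.allowed ℓ (some Q3.q0) ↔ z = some Q3.q1 ∨ z = some Q3.q2 := by
  constructor
  · rintro (⟨hemp, -⟩ | ⟨q', hq', rfl⟩)
    · exact absurd hemp (Set.insert_nonempty Q3.q1 {Q3.q2}).ne_empty
    · rcases hq' with rfl | hq'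
      · exact Or.inl rfl
      · replace hq' : q' = Q3.q2 := hq'
        subst hq'
        exact Or.inr rfl
  · rintro (rfl | rfl)
    · exact Or.inr ⟨Q3.q1, Set.mem_insert _ _, rfl⟩
    · exact Or.inr ⟨Q3.q2, Set.mem_insert_of_mem _ rfl, rfl⟩

lemma next_q1_empty : Aphi.next Q3.q1 false = ∅ := by
  ext q; simp [Aphi]; exact Iff.rfl

lemma next_q2_empty : Aphi.next Q3.q2 true = ∅ := by
  ext q; simp [Aphi]; exact Iff.rfl

lemma mem_allowed_q1 (ℓ : Bool) (z : Option Q3) :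
    z ∈ Aphi.allowed ℓ (some Q3.q1) ↔
      (ℓ = true ∧ z = some Q3.q0) ∨ (ℓ = false ∧ z = none) := by
  cases ℓ
  · constructor
    · rintro (⟨-, rfl⟩ | ⟨q', hq', rfl⟩)
      · exact Or.inr ⟨rfl, rfl⟩
      · exact absurd hq'.1 (by simp)
    · rintro (⟨h, -⟩ | ⟨-, rfl⟩)
      · exact absurd h (by simp)
      · exact Or.inl ⟨next_q1_empty, rfl⟩
  · constructor
    · rintro (⟨hemp, -⟩ | ⟨q', hq', rfl⟩)
      · exfalso
        have : Q3.q0 ∈ Aphi.next Q3.q1 true := ⟨rfl, rfl⟩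
        rw [hemp] at this
        exact this
      · obtain ⟨-, rfl⟩ := hq'
        exact Or.inl ⟨rfl, rfl⟩
    · rintro (⟨-, rfl⟩ | ⟨h, -⟩)
      · exact Or.inr ⟨Q3.q0, ⟨rfl, rfl⟩, rfl⟩
      · exact absurd h (by simp)

lemma mem_allowed_q2 (ℓ : Bool) (z : Option Q3) :
    z ∈ Aphi.allowed ℓ (some Q3.q2) ↔
      (ℓ = false ∧ z = some Q3.q0) ∨ (ℓ = true ∧ z = none) := by
  cases ℓ
  · constructor
    · rintro (⟨hemp, -⟩ | ⟨q', hq', rfl⟩)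
      · exfalso
        have : Q3.q0 ∈ Aphi.next Q3.q2 false := ⟨rfl, rfl⟩
        rw [hemp] at this
        exact this
      · obtain ⟨-, rfl⟩ := hq'
        exact Or.inl ⟨rfl, rfl⟩
    · rintro (⟨-, rfl⟩ | ⟨h, -⟩)
      · exact Or.inr ⟨Q3.q0, ⟨rfl, rfl⟩, rfl⟩
      · exact absurd h (by simp)
  · constructor
    · rintro (⟨-, rfl⟩ | ⟨q', hq', rfl⟩)
      · exact Or.inr ⟨rfl, rfl⟩
      · exact absurd hq'.1 (by simp)
    · rintro (⟨h, -⟩ | ⟨-, rfl⟩)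
      · exact absurd h (by simp)
      · exact Or.inl ⟨next_q2_empty, rfl⟩

lemma label_eq (s : chainM.S) : chainM.label s = s := rfl

lemma chi_none : chi none = 0 := rfl

lemma chi_some (q : Q3) : chi (some q) = 1 := by simp [chi]

lemma Kf_none : Kf none = 0 := rfl
lemma Kf_q0 : Kf (some Q3.q0) = 1 := rfl
lemma Kf_q1 : Kf (some Q3.q1) = 2⁻¹ := rfl
lemma Kf_q2 : Kf (some Q3.q2) = 2⁻¹ := rfl

lemma half_add_half : (2⁻¹ : ℝ≥0∞) * 1 + 2⁻¹ * 1 = 1 := by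
  rw [mul_one, ENNReal.inv_two_add_inv_two]

lemma T1_chi (hσ : TStratValid chainM Aphi σ) (y : Option Q3)
    (h : List (TPos chainM Aphi × TChoice chainM Aphi)) :
    T1 σ y h chi ≤ Kf y := by
  cases y with
  | none =>
    refine le_trans (T1_le σ hσ none h chi (fun _ => 0) ?_) ?_
    · intro s z hz
      replace hz := (mem_allowed_none s z).1 hz
      subst hz
      rw [chi_none]
    · simp [Kf_none]
  | some q =>
    cases q with
    | q0 =>
      refine le_trans (T1_le σ hσ (some Q3.q0) h chi (fun _ => 1) ?_) ?_
      · intro s z _; exact chi_le_one z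
      · rw [Kf_q0]
        exact le_of_eq half_add_half
    | q1 =>
      refine le_trans (T1_le σ hσ (some Q3.q1) h chi (fun s => if s then 1 else 0) ?_) ?_
      · intro s z hz
        replace hz := (mem_allowed_q1 s z).1 hz
        cases s
        · rcases hz with ⟨h1, -⟩ | ⟨-, rfl⟩
          · exact absurd h1 (by simp)
          · simp [chi_none]
        · rcases hz with ⟨-, rfl⟩ | ⟨h1, -⟩
          · simp [chi_some]
          · exact absurd h1 (by simp)
      · rw [Kf_q1]
        simp
    | q2 =>
      refine le_trans (T1_le σ hσ (some Q3.q2) h chi (fun s => if s then 0 else 1) ?_) ?_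
      · intro s z hz
        replace hz := (mem_allowed_q2 s z).1 hz
        cases s
        · rcases hz with ⟨-, rfl⟩ | ⟨h1, -⟩
          · simp [chi_some]
          · exact absurd h1 (by simp)
        · rcases hz with ⟨h1, -⟩ | ⟨-, rfl⟩
          · exact absurd h1 (by simp)
          · simp [chi_none]
      · rw [Kf_q2]
        simp

lemma T1_Kf (hσ : TStratValid chainM Aphi σ) (y : Option Q3)
    (h : List (TPos chainM Aphi × TChoice chainM Aphi)) :
    T1 σ y h Kf ≤ 2⁻¹ * chi y := by
  cases y with
  | none =>
    refine le_trans (T1_le σ hσ none h Kf (fun _ => 0) ?_) ?_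
    · intro s z hz
      replace hz := (mem_allowed_none s z).1 hz
      subst hz
      rw [Kf_none]
    · simp [chi_none]
  | some q =>
    cases q with
    | q0 =>
      refine le_trans (T1_le σ hσ (some Q3.q0) h Kf (fun _ => 2⁻¹) ?_) ?_
      · intro s z hz
        replace hz := (mem_allowed_q0 s z).1 hz
        rcases hz with rfl | rfl
        · rw [Kf_q1]
        · rw [Kf_q2]
      · rw [chi_some, mul_one, ← mul_add, ENNReal.inv_two_add_inv_two, mul_one]
    | q1 =>
      refine le_trans (T1_le σ hσ (some Q3.q1) h Kf (fun s => if s then 1 else 0) ?_) ?_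
      · intro s z hz
        replace hz := (mem_allowed_q1 s z).1 hz
        cases s
        · rcases hz with ⟨h1, -⟩ | ⟨-, rfl⟩
          · exact absurd h1 (by simp)
          · simp [Kf_none]
        · rcases hz with ⟨-, rfl⟩ | ⟨h1, -⟩
          · simp [Kf_q0]
          · exact absurd h1 (by simp)
      · rw [chi_some, mul_one]
        simp
    | q2 =>
      refine le_trans (T1_le σ hσ (some Q3.q2) h Kf (fun s => if s then 0 else 1) ?_) ?_
      · intro s z hz
        replace hz := (mem_allowed_q2 s z).1 hz
        cases s
        · rcases hz with ⟨-, rfl⟩ | ⟨h1, -⟩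
          · simp [Kf_q0]
          · exact absurd h1 (by simp)
        · rcases hz with ⟨h1, -⟩ | ⟨-, rfl⟩
          · exact absurd h1 (by simp)
          · simp [Kf_none]
      · rw [chi_some, mul_one]
        simp

lemma T1_one (hσ : TStratValid chainM Aphi σ)
    (y : Option Q3) (h : List (TPos chainM Aphi × TChoice chainM Aphi)) :
    T1 σ y h (fun _ => 1) ≤ 1 := by
  refine le_trans (T1_le σ hσ y h (fun _ => 1) (fun _ => 1) (fun _ _ _ => le_rfl)) ?_
  exact le_of_eq half_add_half

lemma key_marg {n : ℕ} (u : Fin (n+1) → Epc) (f : Option Q3 → ℝ≥0∞) :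
    ∑ e : Epc, PP σ (extv (Fin.snoc u e)) (n+1) * f e.2.2
      = PP σ (extv u) n
        * T1 σ ((u (Fin.last n)).2.2) ((List.range (n+1)).map (extv u)) f := by
  unfold T1
  rw [Finset.mul_sum]
  apply Finset.sum_congr rfl
  intro e _
  rw [PP_snoc]
  ring

/-- Total weight of live prefixes of length `n+1`. -/
noncomputable def Wm (n : ℕ) : ℝ≥0∞ :=
  ∑ v : Fin (n+1) → Epc, PP σ (extv v) n * chi ((v (Fin.last n)).2.2)

lemma total_zero (hσ : TStratValid chainM Aphi σ) :
    (∑ v : Fin 1 → Epc, PP σ (extv v) 0) ≤ 1 := by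
  have hre : ∀ v : Fin 1 → Epc, PP σ (extv v) 0
      = (if (v default).1 = (chainM.init, some Aphi.init) then 1 else 0)
        * σ [] (v default).1 (v default).2 := by
    intro v
    show (if (extv v 0).1 = _ then _ else _) * σ [] (extv v 0).1 (extv v 0).2 = _
    rw [extv_eq v (le_refl 0)]
    have hd : (⟨0, by omega⟩ : Fin 1) = default := Subsingleton.elim _ _
    rw [hd]
  calc (∑ v : Fin 1 → Epc, PP σ (extv v) 0)
      = ∑ x : Epc, (if x.1 = (chainM.init, some Aphi.init) then 1 else 0) * σ [] x.1 x.2 := by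
        apply Fintype.sum_equiv (Equiv.funUnique (Fin 1) Epc)
        intro v
        rw [hre v]
        rfl
    _ = ∑ p : TPos chainM Aphi, (if p = (chainM.init, some Aphi.init) then (1:ℝ≥0∞) else 0) := by
        rw [Fintype.sum_prod_type]
        apply Finset.sum_congr rfl
        intro p _
        have hbeta : ∀ c : TChoice chainM Aphi,
            (if ((p, c) : Epc).1 = (chainM.init, some Aphi.init) then (1:ℝ≥0∞) else 0)
              * σ [] ((p, c) : Epc).1 ((p, c) : Epc).2
            = (if p = (chainM.init, some Aphi.init) then (1:ℝ≥0∞) else 0) * σ [] p c :=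
          fun c => rfl
        rw [show (fun c : TChoice chainM Aphi =>
            (if ((p, c) : Epc).1 = (chainM.init, some Aphi.init) then (1:ℝ≥0∞) else 0)
              * σ [] ((p, c) : Epc).1 ((p, c) : Epc).2)
          = (fun c : TChoice chainM Aphi =>
            (if p = (chainM.init, some Aphi.init) then (1:ℝ≥0∞) else 0) * σ [] p c) from
          funext hbeta]
        rw [← Finset.mul_sum, (hσ [] p).1, mul_one]
    _ ≤ 1 := by
        rw [Finset.sum_ite_eq' Finset.univ ((chainM.init, some Aphi.init) : TPos chainM Aphi)
          (fun _ => (1:ℝ≥0∞))]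
        simp

lemma W_zero (hσ : TStratValid chainM Aphi σ) : Wm σ 0 ≤ 1 := by
  refine le_trans ?_ (total_zero σ hσ)
  unfold Wm
  apply Finset.sum_le_sum
  intro v _
  calc PP σ (extv v) 0 * chi ((v (Fin.last 0)).2.2)
      ≤ PP σ (extv v) 0 * 1 := mul_le_mul_right (chi_le_one _) _
    _ = PP σ (extv v) 0 := mul_one _

lemma W_one (hσ : TStratValid chainM Aphi σ) : Wm σ 1 ≤ 1 := by
  have h1 : Wm σ 1 ≤ ∑ v : Fin (1+1) → Epc, PP σ (extv v) 1 := by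
    unfold Wm
    apply Finset.sum_le_sum
    intro v _
    calc PP σ (extv v) 1 * chi ((v (Fin.last 1)).2.2)
        ≤ PP σ (extv v) 1 * 1 := mul_le_mul_right (chi_le_one _) _
      _ = PP σ (extv v) 1 := mul_one _
  refine h1.trans ?_
  calc (∑ v : Fin (1+1) → Epc, PP σ (extv v) 1)
      = ∑ u : Fin 1 → Epc, ∑ e : Epc, PP σ (extv (Fin.snoc u e)) 1 := sum_snoc _
    _ = ∑ u : Fin 1 → Epc, ∑ e : Epc,
          PP σ (extv (Fin.snoc u e)) 1 * (fun _ : Option Q3 => (1:ℝ≥0∞)) e.2.2 := by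
        simp
    _ = ∑ u : Fin 1 → Epc, PP σ (extv u) 0
          * T1 σ ((u (Fin.last 0)).2.2) ((List.range 1).map (extv u)) (fun _ => 1) := by
        apply Finset.sum_congr rfl
        intro u _
        exact key_marg σ u (fun _ => 1)
    _ ≤ ∑ u : Fin 1 → Epc, PP σ (extv u) 0 * 1 := by
        apply Finset.sum_le_sum
        intro u _
        exact mul_le_mul_right (T1_one σ hσ _ _) _
    _ ≤ 1 := by
        simp only [mul_one]
        exact total_zero σ hσ

lemma W_step (hσ : TStratValid chainM Aphi σ) (n : ℕ) : Wm σ (n+2) ≤ 2⁻¹ * Wm σ n := by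
  calc Wm σ (n+2)
      = ∑ u' : Fin (n+2) → Epc, ∑ e : Epc,
          PP σ (extv (Fin.snoc u' e)) (n+2) * chi e.2.2 := by
        unfold Wm
        rw [sum_snoc]
        apply Finset.sum_congr rfl
        intro u' _
        apply Finset.sum_congr rfl
        intro e _
        rw [Fin.snoc_last]
    _ = ∑ u' : Fin (n+2) → Epc, PP σ (extv u') (n+1)
          * T1 σ ((u' (Fin.last (n+1))).2.2) ((List.range (n+2)).map (extv u')) chi := by
        apply Finset.sum_congr rfl
        intro u' _
        exact key_marg σ u' chi
    _ ≤ ∑ u' : Fin (n+2) → Epc, PP σ (extv u') (n+1) * Kf ((u' (Fin.last (n+1))).2.2) := by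
        apply Finset.sum_le_sum
        intro u' _
        exact mul_le_mul_right (T1_chi σ hσ _ _) _
    _ = ∑ u : Fin (n+1) → Epc, ∑ e1 : Epc,
          PP σ (extv (Fin.snoc u e1)) (n+1) * Kf e1.2.2 := by
        rw [sum_snoc]
        apply Finset.sum_congr rfl
        intro u _
        apply Finset.sum_congr rfl
        intro e1 _
        rw [Fin.snoc_last]
    _ = ∑ u : Fin (n+1) → Epc, PP σ (extv u) n
          * T1 σ ((u (Fin.last n)).2.2) ((List.range (n+1)).map (extv u)) Kf := by
        apply Finset.sum_congr rfl
        intro u _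
        exact key_marg σ u Kf
    _ ≤ ∑ u : Fin (n+1) → Epc, PP σ (extv u) n * (2⁻¹ * chi ((u (Fin.last n)).2.2)) := by
        apply Finset.sum_le_sum
        intro u _
        exact mul_le_mul_right (T1_Kf σ hσ _ _) _
    _ = 2⁻¹ * Wm σ n := by
        unfold Wm
        rw [Finset.mul_sum]
        apply Finset.sum_congr rfl
        intro u _
        ring

lemma W_bound (hσ : TStratValid chainM Aphi σ) :
    ∀ k, Wm σ (2*k) ≤ 2⁻¹ ^ k ∧ Wm σ (2*k+1) ≤ 2⁻¹ ^ k := by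
  intro k
  induction k with
  | zero =>
    constructor
    · simpa using W_zero σ hσ
    · simpa using W_one σ hσ
  | succ k ih =>
    constructor
    · have e1 : 2*(k+1) = (2*k) + 2 := by ring
      rw [e1]
      calc Wm σ (2*k + 2) ≤ 2⁻¹ * Wm σ (2*k) := W_step σ hσ _
        _ ≤ 2⁻¹ * 2⁻¹ ^ k := mul_le_mul_right ih.1 _
        _ = 2⁻¹ ^ (k+1) := by rw [pow_succ, mul_comm]
    · have e1 : 2*(k+1)+1 = (2*k+1) + 2 := by ring
      rw [e1]
      calc Wm σ (2*k+1 + 2) ≤ 2⁻¹ * Wm σ (2*k+1) := W_step σ hσ _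
        _ ≤ 2⁻¹ * 2⁻¹ ^ k := mul_le_mul_right ih.2 _
        _ = 2⁻¹ ^ (k+1) := by rw [pow_succ, mul_comm]

lemma alive_le (hσ : TStratValid chainM Aphi σ)
    (μ : @MeasureTheory.Measure (ℕ → Epc) (trajMS Epc))
    (hμ : IsTRunMeasure chainM Aphi σ chainM.init μ) (m : ℕ) :
    μ {r : ℕ → Epc | (r (m+1)).1.2 ≠ none} ≤ Wm σ m := by
  classical
  set F : Finset (Fin (m+2) → Epc) :=
    Finset.univ.filter (fun v => (v (Fin.last (m+1))).1.2 ≠ none) with hF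
  have hsub : {r : ℕ → Epc | (r (m+1)).1.2 ≠ none}
      ⊆ ⋃ v ∈ F, {r' : ℕ → Epc | ∀ i ≤ m+1, r' i = extv v i} := by
    intro r hr
    apply Set.mem_iUnion₂.mpr
    refine ⟨fun i : Fin (m+2) => r i, ?_, ?_⟩
    · rw [hF, Finset.mem_filter]
      exact ⟨Finset.mem_univ _, hr⟩
    · intro i hi
      rw [extv_eq _ hi]
  have h1 : μ {r : ℕ → Epc | (r (m+1)).1.2 ≠ none} ≤ ∑ v ∈ F, PP σ (extv v) (m+1) := by
    calc μ {r : ℕ → Epc | (r (m+1)).1.2 ≠ none}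
        ≤ μ (⋃ v ∈ F, {r' : ℕ → Epc | ∀ i ≤ m+1, r' i = extv v i}) := measure_mono hsub
      _ ≤ ∑ v ∈ F, μ {r' : ℕ → Epc | ∀ i ≤ m+1, r' i = extv v i} :=
          measure_biUnion_finset_le F _
      _ = ∑ v ∈ F, PP σ (extv v) (m+1) :=
          Finset.sum_congr rfl fun v _ => hμ.2 (extv v) (m+1)
  have h2 : ∑ v ∈ F, PP σ (extv v) (m+1)
      = ∑ u : Fin (m+1) → Epc, ∑ e : Epc,
          (if e.1.2 ≠ none then PP σ (extv (Fin.snoc u e)) (m+1) else 0) := by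
    rw [hF, Finset.sum_filter, sum_snoc]
    apply Finset.sum_congr rfl
    intro u _
    apply Finset.sum_congr rfl
    intro e _
    rw [Fin.snoc_last]
  have h4 : ∀ u : Fin (m+1) → Epc,
      (∑ e : Epc, (if e.1.2 ≠ none then PP σ (extv (Fin.snoc u e)) (m+1) else 0))
        ≤ PP σ (extv u) m * chi ((u (Fin.last m)).2.2) := by
    intro u
    by_cases hy : (u (Fin.last m)).2.2 = none
    · have hz : (∑ e : Epc, (if e.1.2 ≠ none then PP σ (extv (Fin.snoc u e)) (m+1) else 0)) = 0 := by
        apply Finset.sum_eq_zero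
        intro e _
        by_cases he : e.1.2 = none
        · rw [if_neg (not_not.mpr he)]
        · rw [if_pos he, PP_snoc, hy, if_neg (fun hc => he hc.symm)]
          simp
      rw [hz]
      exact zero_le
    · calc (∑ e : Epc, (if e.1.2 ≠ none then PP σ (extv (Fin.snoc u e)) (m+1) else 0))
          ≤ ∑ e : Epc, PP σ (extv (Fin.snoc u e)) (m+1) * (fun _ : Option Q3 => (1:ℝ≥0∞)) e.2.2 := by
            apply Finset.sum_le_sum
            intro e _
            split
            · simp
            · exact zero_le
        _ = PP σ (extv u) m * T1 σ ((u (Fin.last m)).2.2) ((List.range (m+1)).map (extv u))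
              (fun _ => 1) := key_marg σ u (fun _ => 1)
        _ ≤ PP σ (extv u) m * 1 := mul_le_mul_right (T1_one σ hσ _ _) _
        _ = PP σ (extv u) m * chi ((u (Fin.last m)).2.2) := by
            unfold chi
            rw [if_neg (by exact hy)]
  calc μ {r : ℕ → Epc | (r (m+1)).1.2 ≠ none} ≤ ∑ v ∈ F, PP σ (extv v) (m+1) := h1
    _ = ∑ u : Fin (m+1) → Epc, ∑ e : Epc,
          (if e.1.2 ≠ none then PP σ (extv (Fin.snoc u e)) (m+1) else 0) := h2
    _ ≤ ∑ u : Fin (m+1) → Epc, PP σ (extv u) m * chi ((u (Fin.last m)).2.2) :=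
        Finset.sum_le_sum fun u _ => h4 u
    _ = Wm σ m := rfl

lemma tacc_zero (hσ : TStratValid chainM Aphi σ)
    (μ : @MeasureTheory.Measure (ℕ → Epc) (trajMS Epc))
    (hμ : IsTRunMeasure chainM Aphi σ chainM.init μ) :
    μ (tAccSet chainM Aphi) = 0 := by
  have hA : ∀ m, μ {r : ℕ → Epc | (r (m+1)).1.2 ≠ none} ≤ 2⁻¹ ^ (m/2) := by
    intro m
    refine (alive_le σ hσ μ hμ m).trans ?_
    rcases Nat.even_or_odd m with ⟨k, hk⟩ | ⟨k, hk⟩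
    · have hm : m = 2*k := by omega
      have hdiv : m/2 = k := by omega
      rw [hdiv, hm]
      exact (W_bound σ hσ k).1
    · have hm : m = 2*k+1 := by omega
      have hdiv : m/2 = k := by omega
      rw [hdiv, hm]
      exact (W_bound σ hσ k).2
  have htsum : (∑' i : ℕ, (2⁻¹ : ℝ≥0∞) ^ (i/2)) ≤ 4 := by
    rw [← tsum_even_add_odd ENNReal.summable ENNReal.summable]
    have he : ∀ k : ℕ, (2*k)/2 = k := fun k => by omega
    have ho : ∀ k : ℕ, (2*k+1)/2 = k := fun k => by omega
    simp only [he, ho]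
    rw [ENNReal.tsum_geometric, ENNReal.one_sub_inv_two, inv_inv]
    norm_num
  have hk4 : ∀ k : ℕ, μ (tAccSet chainM Aphi) ≤ 2⁻¹ ^ k * 4 := by
    intro k
    have hsub : tAccSet chainM Aphi
        ⊆ ⋃ i : ℕ, {r : ℕ → Epc | (r (2*k + i + 1)).1.2 ≠ none} := by
      intro r hr
      obtain ⟨j, hjmem, hjgt⟩ := Set.Infinite.exists_gt hr (2*k)
      obtain ⟨q, q', h1, h2, h3⟩ := hjmem
      refine Set.mem_iUnion.mpr ⟨j - 2*k, ?_⟩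
      have hidx : 2*k + (j - 2*k) + 1 = j + 1 := by omega
      show (r (2*k + (j - 2*k) + 1)).1.2 ≠ none
      rw [hidx, h2]
      simp
    calc μ (tAccSet chainM Aphi)
        ≤ μ (⋃ i : ℕ, {r : ℕ → Epc | (r (2*k + i + 1)).1.2 ≠ none}) := measure_mono hsub
      _ ≤ ∑' i : ℕ, μ {r : ℕ → Epc | (r (2*k + i + 1)).1.2 ≠ none} := measure_iUnion_le _
      _ ≤ ∑' i : ℕ, (2⁻¹ : ℝ≥0∞) ^ ((2*k + i)/2) := ENNReal.tsum_le_tsum fun i => hA (2*k+i)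
      _ ≤ ∑' i : ℕ, (2⁻¹ : ℝ≥0∞) ^ k * 2⁻¹ ^ (i/2) := by
          apply ENNReal.tsum_le_tsum
          intro i
          rw [← pow_add]
          apply le_of_eq
          congr 1
          omega
      _ = 2⁻¹ ^ k * ∑' i : ℕ, (2⁻¹ : ℝ≥0∞) ^ (i/2) := ENNReal.tsum_mul_left
      _ ≤ 2⁻¹ ^ k * 4 := mul_le_mul_right htsum _
  by_contra hne
  have hd0 : μ (tAccSet chainM Aphi) / 4 ≠ 0 := by
    simp only [ne_eq, ENNReal.div_eq_zero_iff, not_or]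
    exact ⟨hne, by norm_num⟩
  obtain ⟨n, hn⟩ := ENNReal.exists_inv_two_pow_lt hd0
  have h1 : μ (tAccSet chainM Aphi) ≤ 2⁻¹ ^ n * 4 := hk4 n
  have h2 : (2⁻¹:ℝ≥0∞) ^ n * 4 < (μ (tAccSet chainM Aphi) / 4) * 4 := by
    refine ENNReal.mul_lt_mul_left (by norm_num) (by norm_num) ?_
    exact hn
  have h3 : (μ (tAccSet chainM Aphi) / 4) * 4 = μ (tAccSet chainM Aphi) :=
    ENNReal.div_mul_cancel (by norm_num) (by norm_num)
  exact absurd (h1.trans_lt (h2.trans_eq h3)) (lt_irrefl _)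

end PartC

/-- The automaton `A_φ` is not good-for-MDPs:
(a) `A_φ` accepts every ω-word, and the semantic satisfaction probability of
its language in the Markov chain `M` is `1`; but
(b) under every strategy of the product `M × A_φ`, the probability of taking
accepting transitions infinitely often is `0`. -/
theorem aphi_not_good_for_MDPs :
    ((∀ w : ℕ → Bool, Aphi.Accepts w) ∧
      PSemSat chainM {w | Aphi.Accepts w} = 1) ∧
    (∀ σ : TStrat chainM Aphi, TStratValid chainM Aphi σ →
      ∀ μ : @MeasureTheory.Measure (ℕ → TPos chainM Aphi × TChoice chainM Aphi)
        (trajMS (TPos chainM Aphi × TChoice chainM Aphi)),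
        IsTRunMeasure chainM Aphi σ chainM.init μ →
          μ (tAccSet chainM Aphi) = 0) := by
  exact ⟨⟨aphi_accepts_all, psemsat_eq_one⟩, fun σ hσ μ hμ => tacc_zero σ hσ μ hμ⟩

end GFM
end

section
/- Let S be a deterministic Streett automaton with k Streett pairs, A(S) the alternating Büchi automaton constructed from S, and M a finite MDP over the alphabet of S. In the stochastic Büchi game M × A(S), for every MDP state s and every automaton state q ∈ Q, the acceptance player's value satisfies val(s, q) ≥ val(s, (q, 0)) ≥ val(s, (q, i)) for every i ∈ {1,…,k}, where val(s, x) = sup_σ inf_π of the probability that the acceptance player wins when the game starts in position (s, x). -/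
open scoped ENNReal

set_option maxHeartbeats 1000000

namespace GFM

variable {Alph : Type} {k : ℕ}

section Aux13

variable {Alph : Type} {k : ℕ}

/-- Update the 0-th coordinate of a trajectory. -/
def upd0 {E : Type} (g : E → E) (r : ℕ → E) : ℕ → E := fun n => if n = 0 then g (r 0) else r n

lemma measurable_upd0 {E : Type} (g : E → E) :
    @Measurable _ _ (trajMS E) (trajMS E) (upd0 g) := by
  letI : MeasurableSpace E := ⊤
  refine measurable_pi_lambda _ fun n => ?_
  cases n with
  | zero =>
      have h0 : @Measurable (ℕ → E) E (trajMS E) ⊤ (fun r => r 0) := measurable_pi_apply 0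
      have hg : @Measurable E E ⊤ ⊤ g := measurable_from_top
      simpa [upd0, Function.comp_def] using hg.comp h0
  | succ m =>
      have h1 : @Measurable (ℕ → E) E (trajMS E) ⊤ (fun f => f (m + 1)) := measurable_pi_apply (m + 1)
      simpa [upd0] using h1

lemma measurableSet_cyl {E : Type} (ρ : ℕ → E) (n : ℕ) :
    @MeasurableSet _ (trajMS E) {r' | ∀ i ≤ n, r' i = ρ i} := by
  letI : MeasurableSpace E := ⊤
  have h : {r' : ℕ → E | ∀ i ≤ n, r' i = ρ i}
      = ⋂ (i : ℕ) (_ : i ≤ n), (fun r' : ℕ → E => r' i) ⁻¹' {ρ i} := by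
    ext r'; simp [Set.mem_iInter]
  rw [h]
  exact MeasurableSet.iInter fun i => MeasurableSet.iInter fun _ =>
    (measurable_pi_apply i) (by trivial)

lemma measurableSet_winlike {E : Type} [Countable E] (p : ℕ → E → E → Prop) :
    @MeasurableSet _ (trajMS E) {r | {i : ℕ | p i (r i) (r (i + 1))}.Infinite} := by
  letI : MeasurableSpace E := ⊤
  have h1 : ∀ i : ℕ, @MeasurableSet _ (trajMS E) {r : ℕ → E | p i (r i) (r (i + 1))} := by
    intro i
    have h : {r : ℕ → E | p i (r i) (r (i + 1))}
        = ⋃ (x : E) (y : E) (_ : p i x y),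
            ((fun r : ℕ → E => r i) ⁻¹' {x} ∩ (fun r : ℕ → E => r (i + 1)) ⁻¹' {y}) := by
      ext r
      simp only [Set.mem_iUnion, Set.mem_inter_iff, Set.mem_preimage, Set.mem_singleton_iff,
        Set.mem_setOf_eq]
      constructor
      · intro h; exact ⟨r i, r (i + 1), h, rfl, rfl⟩
      · rintro ⟨x, y, hp, hx, hy⟩; rw [hx, hy]; exact hp
    rw [h]
    exact MeasurableSet.iUnion fun x => MeasurableSet.iUnion fun y =>
      MeasurableSet.iUnion fun _ =>
        ((measurable_pi_apply i) (by trivial)).inter ((measurable_pi_apply (i + 1)) (by trivial))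
  have h2 : {r : ℕ → E | {i : ℕ | p i (r i) (r (i + 1))}.Infinite}
      = ⋂ (n : ℕ), ⋃ (i : ℕ) (_ : n ≤ i), {r : ℕ → E | p i (r i) (r (i + 1))} := by
    ext r
    simp only [Set.mem_iInter, Set.mem_iUnion, Set.mem_setOf_eq]
    constructor
    · intro h n
      obtain ⟨m, hm, hlt⟩ := h.exists_gt n
      exact ⟨m, hlt.le, hm⟩
    · intro h
      by_contra hfin
      rw [Set.not_infinite] at hfin
      obtain ⟨b, hb⟩ := hfin.bddAbove
      obtain ⟨i, hi, hp⟩ := h (b + 1)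
      have := hb hp
      omega
  rw [h2]
  exact MeasurableSet.iInter fun n => MeasurableSet.iUnion fun i =>
    MeasurableSet.iUnion fun _ => h1 i

lemma measurableSet_gameWinSet (M : FinMDP Alph) (St : DSA Alph k) :
    @MeasurableSet _ (trajMS (GPos M St × GChoice M St)) (gameWinSet M St) := by
  have h := measurableSet_winlike (E := GPos M St × GChoice M St)
    (p := fun _ x y => (x.1.2, M.label x.1.1, y.1.2) ∈ St.altF)
  exact h

/-- Generic simulation plumbing for the game value. -/
lemma gameValFrom_le_of_sim (M : FinMDP Alph) (St : DSA Alph k) (s : M.S)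
    (x0 y0 : AltState St)
    (h : ∀ σ, AccStratValid M St σ → ∃ σ', AccStratValid M St σ' ∧
      ∀ π', RejStratValid M St π' → ∃ π, RejStratValid M St π ∧
        ∀ μ, IsGameRunMeasure M St σ π s x0 μ →
          ∃ μ', IsGameRunMeasure M St σ' π' s y0 μ' ∧
            μ (gameWinSet M St) ≤ μ' (gameWinSet M St)) :
    gameValFrom M St s x0 ≤ gameValFrom M St s y0 := by
  unfold gameValFrom
  refine iSup₂_le fun σ hσ => ?_
  obtain ⟨σ', hσ', H⟩ := h σ hσ
  refine le_trans ?_ (le_iSup₂ σ' hσ')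
  refine le_iInf₂ fun π' hπ' => ?_
  obtain ⟨π, hπ, H2⟩ := H π' hπ'
  refine le_trans (iInf₂_le π hπ) ?_
  refine iSup₂_le fun μ hμ => ?_
  obtain ⟨μ', hμ', hle⟩ := H2 μ hμ
  exact le_trans hle (le_iSup₂_of_le μ' hμ' le_rfl)

/-- Transfer a run measure along a trajectory map. -/
lemma transfer_measure (M : FinMDP Alph) (St : DSA Alph k)
    (σ σ' : AccStrat M St) (π π' : RejStrat M St) (s : M.S) (x0 y0 : AltState St)
    (Φ : (ℕ → GPos M St × GChoice M St) → (ℕ → GPos M St × GChoice M St))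
    (hΦ : @Measurable _ _ (trajMS _) (trajMS _) Φ)
    (hwin : ∀ r, r ∈ gameWinSet M St → Φ r ∈ gameWinSet M St)
    (μ : @MeasureTheory.Measure (ℕ → GPos M St × GChoice M St) (trajMS _))
    (hμ : IsGameRunMeasure M St σ π s x0 μ)
    (hcyl : ∀ (ρ : ℕ → GPos M St × GChoice M St) (n : ℕ),
      μ (Φ ⁻¹' {r' | ∀ i ≤ n, r' i = ρ i}) = gamePrefixProb M St σ' π' s y0 ρ n) :
    ∃ μ', IsGameRunMeasure M St σ' π' s y0 μ' ∧
      μ (gameWinSet M St) ≤ μ' (gameWinSet M St) := by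
  refine ⟨@MeasureTheory.Measure.map _ _ (trajMS _) (trajMS _) Φ μ, ⟨?_, ?_⟩, ?_⟩
  · rw [@MeasureTheory.Measure.map_apply _ _ (trajMS _) (trajMS _) μ Φ hΦ _ MeasurableSet.univ,
      Set.preimage_univ]
    exact hμ.1
  · intro r n
    rw [@MeasureTheory.Measure.map_apply _ _ (trajMS _) (trajMS _) μ Φ hΦ _ (measurableSet_cyl r n)]
    exact hcyl r n
  · rw [@MeasureTheory.Measure.map_apply _ _ (trajMS _) (trajMS _) μ Φ hΦ _
      (measurableSet_gameWinSet M St)]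
    exact MeasureTheory.measure_mono hwin

end Aux13
section Case13B

variable {Alph : Type} {k : ℕ}

lemma map_range_succ_cons {E : Type _} (f : ℕ → E) (n : ℕ) :
    (List.range (n + 1)).map f = f 0 :: (List.range n).map (fun m => f (m + 1)) := by
  rw [List.range_succ_eq_map, List.map_cons, List.map_map]
  rfl

lemma altNext_inr_eq (St : DSA Alph k) (z : St.Q) (c c' : Copy k) (a : Alph) :
    St.altNext (Sum.inr (z, c)) a = St.altNext (Sum.inr (z, c')) a := by
  have key : ∀ c : Copy k, St.altNext (Sum.inr (z, c)) a =
      {x | ∃ c'' : Copy k, x = Sum.inr (St.next z a, c'') ∧ c'' ∈ St.Iset (St.next z a)} := by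
    intro c; ext x
    simp only [DSA.altNext, Set.mem_setOf_eq]
    constructor
    · rintro ⟨c'', h1, h2, _⟩; exact ⟨c'', h1, h2⟩
    · rintro ⟨c'', h1, h2⟩
      refine ⟨c'', h1, h2, ?_⟩
      rintro ⟨j, rfl, hG, rfl⟩
      rcases h2 with h2 | ⟨j', hj', hR⟩
      · exact nomatch h2
      · obtain rfl : j = j' := by
          simpa using hj'
        have hmem : St.next z a ∈ St.G j ∩ St.R j := ⟨hG, hR⟩
        rw [St.disjGR j] at hmem
        exact hmem
  rw [key c, key c']

lemma inr_none_mem_altNext (St : DSA Alph k) (z : St.Q) (c : Copy k) (a : Alph) :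
    Sum.inr (St.next z a, (none : Copy k)) ∈ St.altNext (Sum.inr (z, c)) a := by
  simp only [DSA.altNext, Set.mem_setOf_eq]
  refine ⟨none, rfl, Or.inl rfl, ?_⟩
  rintro ⟨j, rfl, -, hc⟩
  exact nomatch hc

/-- Entry translation: apply `φ` to the automaton state of the recorded position. -/
def trEntry (M : FinMDP Alph) (St : DSA Alph k) (φ : AltState St → AltState St)
    (e : GPos M St × GChoice M St) : GPos M St × GChoice M St :=
  ((e.1.1, φ e.1.2), e.2)

/-- The acceptance strategy that plays like `σ` with the initial entry translated. -/
def simB (M : FinMDP Alph) (St : DSA Alph k) (σ : AccStrat M St)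
    (φ : AltState St → AltState St) : AccStrat M St := fun h p c =>
  match h with
  | [] => σ [] (p.1, φ p.2) c
  | e :: t => σ (trEntry M St φ e :: t) p c

/-- The rejection strategy that plays like `π` with the initial entry translated. -/
def rejB (M : FinMDP Alph) (St : DSA Alph k) (π : RejStrat M St)
    (φ : AltState St → AltState St) : RejStrat M St := fun h p x =>
  match h with
  | [] => π [] (p.1, φ p.2) x
  | e :: t => π (trEntry M St φ e :: t) p x

lemma simB_valid (M : FinMDP Alph) (St : DSA Alph k) (σ : AccStrat M St)
    (hσ : AccStratValid M St σ) (φ : AltState St → AltState St)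
    (hIL : ∀ x : AltState St, x.isLeft = true → φ x = x) :
    AccStratValid M St (simB M St σ φ) := by
  intro h p
  cases h with
  | nil =>
      refine ⟨(hσ [] (p.1, φ p.2)).1, fun c hc => (hσ [] (p.1, φ p.2)).2.1 c hc, ?_⟩
      intro c hpl hc
      have hfix : φ p.2 = p.2 := hIL p.2 hpl
      refine (hσ [] (p.1, φ p.2)).2.2 c ?_ ?_
      · show (p.1, φ p.2).2.isLeft = true
        rw [show (p.1, φ p.2).2 = p.2 from hfix]
        exact hpl
      · show c.2 ∉ St.altNext (p.1, φ p.2).2 (M.label (p.1, φ p.2).1)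
        rw [show (p.1, φ p.2).2 = p.2 from hfix]
        exact hc
  | cons e t =>
      exact hσ (trEntry M St φ e :: t) p

lemma rejB_valid (M : FinMDP Alph) (St : DSA Alph k) (π : RejStrat M St)
    (hπ : RejStratValid M St π) (φ : AltState St → AltState St)
    (hR : ∀ x : AltState St, (φ x).isRight = x.isRight)
    (hN : ∀ (x : AltState St) (a : Alph), St.altNext (φ x) a = St.altNext x a) :
    RejStratValid M St (rejB M St π φ) := by
  intro h p hp
  cases h with
  | nil =>
      have hp' : (p.1, φ p.2).2.isRight = true := by
        show (φ p.2).isRight = true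
        rw [hR]; exact hp
      refine ⟨(hπ [] (p.1, φ p.2) hp').1, ?_⟩
      intro x hx
      refine (hπ [] (p.1, φ p.2) hp').2 x ?_
      show x ∉ St.altNext (φ p.2) (M.label p.1)
      rw [hN]; exact hx
  | cons e t =>
      exact hπ (trEntry M St φ e :: t) p hp

/-- The prefix probability identity for the copy-swap simulation. -/
lemma prefixProb_simB (M : FinMDP Alph) (St : DSA Alph k) (σ : AccStrat M St)
    (π' : RejStrat M St) (s : M.S) (x0 y0 : AltState St) (φ : AltState St → AltState St)
    (hinv : ∀ x, φ (φ x) = x) (hL : ∀ x : AltState St, (φ x).isLeft = x.isLeft)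
    (hxy : φ y0 = x0) (ρ : ℕ → GPos M St × GChoice M St) (n : ℕ) :
    gamePrefixProb M St (simB M St σ φ) π' s y0 ρ n
      = gamePrefixProb M St σ (rejB M St π' φ) s x0 (upd0 (trEntry M St φ) ρ) n := by
  have hΨ0 : upd0 (trEntry M St φ) ρ 0 = trEntry M St φ (ρ 0) := by simp [upd0]
  have hΨs : ∀ m : ℕ, upd0 (trEntry M St φ) ρ (m + 1) = ρ (m + 1) := fun m => by simp [upd0]
  have htrtr : ∀ e : GPos M St × GChoice M St, trEntry M St φ (trEntry M St φ e) = e := by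
    intro e; simp [trEntry, hinv]
  induction n with
  | zero =>
      simp only [gamePrefixProb, hΨ0]
      have hiff : (ρ 0).1 = (s, y0) ↔ (trEntry M St φ (ρ 0)).1 = (s, x0) := by
        simp only [trEntry, Prod.ext_iff]
        constructor
        · rintro ⟨h1, h2⟩; exact ⟨h1, by rw [h2, hxy]⟩
        · rintro ⟨h1, h2⟩
          refine ⟨h1, ?_⟩
          have := congrArg φ h2
          rw [← hxy, hinv, hinv] at this
          exact this
      have hσeq : simB M St σ φ [] (ρ 0).1 (ρ 0).2
          = σ [] (trEntry M St φ (ρ 0)).1 (trEntry M St φ (ρ 0)).2 := rfl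
      rw [hσeq]
      by_cases hcase : (ρ 0).1 = (s, y0)
      · rw [if_pos hcase, if_pos (hiff.1 hcase)]
      · rw [if_neg hcase, if_neg (fun hh => hcase (hiff.2 hh))]
  | succ n ih =>
      simp only [gamePrefixProb]
      rw [ih]
      have hT : M.T ((upd0 (trEntry M St φ) ρ) n).1.1 ((upd0 (trEntry M St φ) ρ) n).2.1
            ((upd0 (trEntry M St φ) ρ) (n + 1)).1.1
          = M.T ((ρ n).1.1) ((ρ n).2.1) ((ρ (n + 1)).1.1) := by
        cases n with
        | zero => rw [hΨ0, hΨs 0]; rfl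
        | succ m => rw [hΨs m, hΨs (m + 1)]
      have hmid : (if ((upd0 (trEntry M St φ) ρ) n).1.2.isLeft then
            (if ((upd0 (trEntry M St φ) ρ) n).2.2 = ((upd0 (trEntry M St φ) ρ) (n + 1)).1.2
              then (1 : ℝ≥0∞) else 0)
            else rejB M St π' φ ((List.range n).map (upd0 (trEntry M St φ) ρ))
              ((upd0 (trEntry M St φ) ρ) n).1 (((upd0 (trEntry M St φ) ρ) (n + 1)).1.2))
          = (if (ρ n).1.2.isLeft then
              (if (ρ n).2.2 = (ρ (n + 1)).1.2 then (1 : ℝ≥0∞) else 0)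
            else π' ((List.range n).map ρ) (ρ n).1 ((ρ (n + 1)).1.2)) := by
        cases n with
        | zero =>
            rw [hΨ0, hΨs 0]
            have hLL : (trEntry M St φ (ρ 0)).1.2.isLeft = (ρ 0).1.2.isLeft := hL _
            by_cases hleft : (ρ 0).1.2.isLeft
            · rw [if_pos hleft, if_pos (by rw [hLL]; exact hleft)]
              rfl
            · rw [if_neg hleft, if_neg (by rw [hLL]; exact hleft)]
              show π' [] ((trEntry M St φ (ρ 0)).1.1, φ (trEntry M St φ (ρ 0)).1.2) _ = _
              have heq : ((trEntry M St φ (ρ 0)).1.1, φ (trEntry M St φ (ρ 0)).1.2) = (ρ 0).1 := by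
                simp [trEntry, hinv]
              rw [heq]
              rfl
        | succ m =>
            rw [hΨs m, hΨs (m + 1)]
            by_cases hleft : (ρ (m + 1)).1.2.isLeft
            · rw [if_pos hleft, if_pos hleft]
            · rw [if_neg hleft, if_neg hleft]
              have hlist : (List.range (m + 1)).map (upd0 (trEntry M St φ) ρ)
                  = trEntry M St φ (ρ 0) :: (List.range m).map (fun j => ρ (j + 1)) := by
                rw [map_range_succ_cons]
                rw [hΨ0]
                congr 1
              rw [hlist]
              show π' (trEntry M St φ (trEntry M St φ (ρ 0))
                :: (List.range m).map (fun j => ρ (j + 1))) _ _ = _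
              rw [htrtr, ← map_range_succ_cons]
      have hσf : simB M St σ φ ((List.range (n + 1)).map ρ) ((ρ (n + 1)).1) ((ρ (n + 1)).2)
          = σ ((List.range (n + 1)).map (upd0 (trEntry M St φ) ρ))
              (((upd0 (trEntry M St φ) ρ) (n + 1)).1) (((upd0 (trEntry M St φ) ρ) (n + 1)).2) := by
        rw [hΨs n]
        have hl1 : (List.range (n + 1)).map ρ = ρ 0 :: (List.range n).map (fun j => ρ (j + 1)) :=
          map_range_succ_cons ρ n
        have hl2 : (List.range (n + 1)).map (upd0 (trEntry M St φ) ρ)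
            = trEntry M St φ (ρ 0) :: (List.range n).map (fun j => ρ (j + 1)) := by
          rw [map_range_succ_cons, hΨ0]
          congr 1
        rw [hl1, hl2]
        rfl
      rw [hT, hmid, hσf]

end Case13B
section Case13Bend

variable {Alph : Type} {k : ℕ}

lemma caseB_le (St : DSA Alph k) (M : FinMDP Alph) (s : M.S) (q : St.Q) (i : Fin k) :
    gameValFrom M St s (Sum.inr (q, some i)) ≤
      gameValFrom M St s (Sum.inr (q, (none : Copy k))) := by
  classical
  set x0 : AltState St := Sum.inr (q, some i) with hx0
  set y0 : AltState St := Sum.inr (q, (none : Copy k)) with hy0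
  set φ : AltState St → AltState St := ⇑(Equiv.swap x0 y0) with hφ
  have hinv : ∀ x, φ (φ x) = x := fun x => Equiv.swap_apply_self x0 y0 x
  have hIL : ∀ x : AltState St, x.isLeft = true → φ x = x := by
    intro x hx
    cases x with
    | inl z => exact Equiv.swap_apply_of_ne_of_ne (by simp [hx0]) (by simp [hy0])
    | inr y => simp at hx
  have hL : ∀ x : AltState St, (φ x).isLeft = x.isLeft := by
    intro x
    by_cases h1 : x = x0
    · subst h1; rw [hφ]; show (Equiv.swap x0 y0 x0).isLeft = _
      rw [Equiv.swap_apply_left]; rfl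
    by_cases h2 : x = y0
    · subst h2; rw [hφ]; show (Equiv.swap x0 y0 y0).isLeft = _
      rw [Equiv.swap_apply_right]; rfl
    · rw [hφ]; show (Equiv.swap x0 y0 x).isLeft = _
      rw [Equiv.swap_apply_of_ne_of_ne h1 h2]
  have hR : ∀ x : AltState St, (φ x).isRight = x.isRight := by
    intro x
    by_cases h1 : x = x0
    · subst h1; rw [hφ]; show (Equiv.swap x0 y0 x0).isRight = _
      rw [Equiv.swap_apply_left]; rfl
    by_cases h2 : x = y0
    · subst h2; rw [hφ]; show (Equiv.swap x0 y0 y0).isRight = _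
      rw [Equiv.swap_apply_right]; rfl
    · rw [hφ]; show (Equiv.swap x0 y0 x).isRight = _
      rw [Equiv.swap_apply_of_ne_of_ne h1 h2]
  have hxy : φ y0 = x0 := Equiv.swap_apply_right x0 y0
  have hN : ∀ (x : AltState St) (a : Alph), St.altNext (φ x) a = St.altNext x a := by
    intro x a
    by_cases h1 : x = x0
    · subst h1; rw [hφ]; show St.altNext (Equiv.swap x0 y0 x0) a = _
      rw [Equiv.swap_apply_left]
      exact altNext_inr_eq St q none (some i) a
    by_cases h2 : x = y0
    · subst h2; rw [hφ]; show St.altNext (Equiv.swap x0 y0 y0) a = _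
      rw [Equiv.swap_apply_right]
      exact altNext_inr_eq St q (some i) none a
    · rw [hφ]; show St.altNext (Equiv.swap x0 y0 x) a = _
      rw [Equiv.swap_apply_of_ne_of_ne h1 h2]
  have htrtr : ∀ e : GPos M St × GChoice M St, trEntry M St φ (trEntry M St φ e) = e := by
    intro e; simp [trEntry, hinv]
  apply gameValFrom_le_of_sim M St s x0 y0
  intro σ hσ
  refine ⟨simB M St σ φ, simB_valid M St σ hσ φ hIL, ?_⟩
  intro π' hπ'
  refine ⟨rejB M St π' φ, rejB_valid M St π' hπ' φ hR hN, ?_⟩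
  intro μ hμ
  refine transfer_measure M St σ (simB M St σ φ) (rejB M St π' φ) π' s x0 y0
    (upd0 (trEntry M St φ)) (measurable_upd0 _) ?_ μ hμ ?_
  · intro r hr
    simp only [gameWinSet, Set.mem_setOf_eq] at hr ⊢
    refine (hr.diff (Set.finite_singleton 0)).mono ?_
    rintro j ⟨hj, hj0⟩
    simp only [Set.mem_setOf_eq, Set.mem_singleton_iff] at hj hj0 ⊢
    obtain ⟨m, rfl⟩ : ∃ m, j = m + 1 := ⟨j - 1, by omega⟩
    simpa [upd0] using hj
  · intro ρ n
    have hset : upd0 (trEntry M St φ) ⁻¹' {r' | ∀ i' ≤ n, r' i' = ρ i'}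
        = {r' | ∀ i' ≤ n, r' i' = upd0 (trEntry M St φ) ρ i'} := by
      ext r
      simp only [Set.mem_preimage, Set.mem_setOf_eq]
      constructor
      · intro h i' hi'
        have hh := h i' hi'
        cases i' with
        | zero =>
            have h0 : trEntry M St φ (r 0) = ρ 0 := by simpa [upd0] using hh
            have h1 := congrArg (trEntry M St φ) h0
            rw [htrtr] at h1
            simpa [upd0] using h1
        | succ m => simpa [upd0] using hh
      · intro h i' hi'
        have hh := h i' hi'
        cases i' with
        | zero =>
            have h0 : r 0 = trEntry M St φ (ρ 0) := by simpa [upd0] using hh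
            show upd0 (trEntry M St φ) r 0 = ρ 0
            rw [show upd0 (trEntry M St φ) r 0 = trEntry M St φ (r 0) from by simp [upd0], h0,
              htrtr]
        | succ m =>
            show upd0 (trEntry M St φ) r (m + 1) = ρ (m + 1)
            rw [show upd0 (trEntry M St φ) r (m + 1) = r (m + 1) from by simp [upd0]]
            exact hh
    rw [hset, hμ.2]
    exact (prefixProb_simB M St σ π' s x0 y0 φ hinv hL hxy ρ n).symm

end Case13Bend
section Case13A

variable {Alph : Type} {k : ℕ}

lemma inr_none_mem_altNext_inl (St : DSA Alph k) (z : St.Q) (a : Alph) :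
    (Sum.inr (St.next z a, (none : Copy k)) : AltState St) ∈ St.altNext (Sum.inl z) a := by
  simp only [DSA.altNext]
  exact Set.mem_insert_iff.2 (Or.inr rfl)

lemma inl_mem_altNext_inl (St : DSA Alph k) (z : St.Q) (a : Alph) :
    (Sum.inl (St.next z a) : AltState St) ∈ St.altNext (Sum.inl z) a := by
  simp only [DSA.altNext]
  exact Set.mem_insert _ _

/-- The base automaton state of a state of `A(S)`. -/
def baseQ (St : DSA Alph k) : AltState St → St.Q
  | Sum.inl z => z
  | Sum.inr y => y.1

/-- A default valid choice. -/
noncomputable def pickC (M : FinMDP Alph) (St : DSA Alph k) (p : GPos M St) : GChoice M St :=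
  ((M.enabled_nonempty p.1).choose,
    Sum.elim (fun z => (Sum.inl (St.next z (M.label p.1)) : AltState St))
      (fun y => Sum.inr y) p.2)

/-- A default valid acceptance strategy. -/
noncomputable def dfltA (M : FinMDP Alph) (St : DSA Alph k) : AccStrat M St :=
  fun _ p c => if c = pickC M St p then 1 else 0

lemma dfltA_sum (M : FinMDP Alph) (St : DSA Alph k) (h : GHist M St) (p : GPos M St) :
    (∑ c : GChoice M St, dfltA M St h p c) = 1 := by
  simp [dfltA]

lemma dfltA_zero₁ (M : FinMDP Alph) (St : DSA Alph k) (h : GHist M St) (p : GPos M St)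
    (c : GChoice M St) (hc : c.1 ∉ M.enabled p.1) : dfltA M St h p c = 0 := by
  simp only [dfltA]
  rw [if_neg]
  intro hce
  exact hc (hce ▸ (M.enabled_nonempty p.1).choose_spec)

lemma dfltA_zero₂ (M : FinMDP Alph) (St : DSA Alph k) (h : GHist M St) (p : GPos M St)
    (c : GChoice M St) (hp : p.2.isLeft) (hc : c.2 ∉ St.altNext p.2 (M.label p.1)) :
    dfltA M St h p c = 0 := by
  simp only [dfltA]
  rw [if_neg]
  intro hce
  apply hc
  rw [hce]
  cases hp2 : p.2 with
  | inl z =>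
      show (pickC M St p).2 ∈ _
      simp only [pickC, hp2, Sum.elim_inl]
      exact inl_mem_altNext_inl St z (M.label p.1)
  | inr y =>
      rw [hp2] at hp
      simp at hp

lemma dfltA_valid (M : FinMDP Alph) (St : DSA Alph k) : AccStratValid M St (dfltA M St) :=
  fun h p => ⟨dfltA_sum M St h p, fun c hc => dfltA_zero₁ M St h p c hc,
    fun c hp hc => dfltA_zero₂ M St h p c hp hc⟩

lemma acc_le_one {M : FinMDP Alph} {St : DSA Alph k} {σ : AccStrat M St}
    (hσ : AccStratValid M St σ) (h : GHist M St) (p : GPos M St) (c : GChoice M St) :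
    σ h p c ≤ 1 := by
  have hs := (hσ h p).1
  calc σ h p c ≤ ∑ c' : GChoice M St, σ h p c' :=
        Finset.single_le_sum (f := fun c' => σ h p c') (fun _ _ => zero_le)
          (Finset.mem_univ c)
    _ = 1 := hs

/-- Product of the `σ`-probabilities along a history (first argument: the
remaining entries, second argument: the past). -/
noncomputable def prodAlong (M : FinMDP Alph) (St : DSA Alph k) (σ : AccStrat M St) :
    GHist M St → GHist M St → ℝ≥0∞
  | [], _ => 1
  | e :: t, past => σ past e.1 e.2 * prodAlong M St σ t (past ++ [e])

lemma prodAlong_snoc (M : FinMDP Alph) (St : DSA Alph k) (σ : AccStrat M St)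
    (l : GHist M St) : ∀ (past : GHist M St) (e : GPos M St × GChoice M St),
    prodAlong M St σ (l ++ [e]) past = prodAlong M St σ l past * σ (past ++ l) e.1 e.2 := by
  induction l with
  | nil => intro past e; simp [prodAlong]
  | cons f t ih =>
      intro past e
      simp only [List.cons_append, prodAlong, List.append_eq]
      rw [ih]
      rw [mul_assoc, ← List.append_cons]

lemma prodAlong_le_one {M : FinMDP Alph} {St : DSA Alph k} {σ : AccStrat M St}
    (hσ : AccStratValid M St σ) (l : GHist M St) :
    ∀ past : GHist M St, prodAlong M St σ l past ≤ 1 := by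
  induction l with
  | nil => intro past; simp [prodAlong]
  | cons f t ih =>
      intro past
      simp only [prodAlong]
      exact mul_le_one' (acc_le_one hσ past f.1 f.2) (ih (past ++ [f]))

/-- Replace the first entry of a history by the corresponding entry of the
`(q, 0)`-game with dummy `d`. -/
def insd (M : FinMDP Alph) (St : DSA Alph k) (s : M.S) (q : St.Q) (d : AltState St) :
    GHist M St → GHist M St
  | [] => []
  | e :: t => (((s, (Sum.inr (q, (none : Copy k)) : AltState St)) : GPos M St),
      ((e.2.1, d) : GChoice M St)) :: t

/-- Posterior weight of dummy `d` given a history of the `(q)`-game. -/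
noncomputable def wgtA (M : FinMDP Alph) (St : DSA Alph k) (σ : AccStrat M St) (s : M.S) (q : St.Q)
    (d : AltState St) (h : GHist M St) : ℝ≥0∞ :=
  prodAlong M St σ (insd M St s q d h) []

noncomputable def CwA (M : FinMDP Alph) (St : DSA Alph k) (σ : AccStrat M St) (s : M.S) (q : St.Q)
    (h : GHist M St) : ℝ≥0∞ :=
  ∑ d : AltState St, wgtA M St σ s q d h

lemma wgtA_le_one {M : FinMDP Alph} {St : DSA Alph k} {σ : AccStrat M St}
    (hσ : AccStratValid M St σ) (s : M.S) (q : St.Q) (d : AltState St) (h : GHist M St) :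
    wgtA M St σ s q d h ≤ 1 :=
  prodAlong_le_one hσ _ _

lemma CwA_ne_top {M : FinMDP Alph} {St : DSA Alph k} {σ : AccStrat M St}
    (hσ : AccStratValid M St σ) (s : M.S) (q : St.Q) (h : GHist M St) :
    CwA M St σ s q h ≠ ⊤ := by
  have hle : CwA M St σ s q h ≤ ∑ _d : AltState St, (1 : ℝ≥0∞) :=
    Finset.sum_le_sum fun d _ => wgtA_le_one hσ s q d h
  refine (lt_of_le_of_lt hle ?_).ne
  simp only [Finset.sum_const, nsmul_eq_mul, mul_one]
  exact ENNReal.natCast_lt_top _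

/-- The mixture acceptance strategy for the `(q)`-game built from `σ`. -/
noncomputable def simA (M : FinMDP Alph) (St : DSA Alph k) (σ : AccStrat M St) (s : M.S) (q : St.Q) :
    AccStrat M St := fun h p c =>
  match h with
  | [] =>
      if p = (s, Sum.inl q) then
        (if c.2 = (Sum.inr (St.next q (M.label s), (none : Copy k)) : AltState St) then
          ∑ d : AltState St, σ [] (s, Sum.inr (q, none)) (c.1, d)
        else 0)
      else dfltA M St [] p c
  | e :: t =>
      if CwA M St σ s q (e :: t) = 0 then dfltA M St (e :: t) p c
      else (∑ d : AltState St,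
          wgtA M St σ s q d (e :: t) * σ (insd M St s q d (e :: t)) p c)
        / CwA M St σ s q (e :: t)

/-- The rejection strategy for the `(q,0)`-game built from `π'`. -/
noncomputable def rejA (M : FinMDP Alph) (St : DSA Alph k) (π : RejStrat M St) (s : M.S) (q : St.Q) :
    RejStrat M St := fun h p x =>
  match h with
  | [] =>
      if x = (Sum.inr (St.next (baseQ St p.2) (M.label p.1), (none : Copy k)) : AltState St)
        then 1 else 0
  | e :: t =>
      π (((s, Sum.inl q),
        ((e.2.1, (Sum.inr (St.next q (M.label s), (none : Copy k)) : AltState St))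
          : GChoice M St)) :: t) p x

lemma simA_valid {M : FinMDP Alph} {St : DSA Alph k} {σ : AccStrat M St}
    (hσ : AccStratValid M St σ) (s : M.S) (q : St.Q) :
    AccStratValid M St (simA M St σ s q) := by
  intro h p
  cases h with
  | nil =>
      by_cases hp : p = (s, Sum.inl q)
      · subst hp
        refine ⟨?_, ?_, ?_⟩
        · show (∑ c : GChoice M St,
            if ((s : M.S), Sum.inl q) = (s, Sum.inl q) then
              (if c.2 = (Sum.inr (St.next q (M.label s), (none : Copy k)) : AltState St) then
                ∑ d : AltState St, σ [] (s, Sum.inr (q, none)) (c.1, d)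
              else 0)
            else dfltA M St [] (s, Sum.inl q) c) = 1
          simp only [if_pos rfl]
          rw [Fintype.sum_prod_type]
          have hx : ∀ a : M.Act, (∑ x : AltState St,
              if (Prod.mk a x).2 = (Sum.inr (St.next q (M.label s), (none : Copy k)) : AltState St) then
                ∑ d : AltState St, σ [] (s, Sum.inr (q, none)) ((Prod.mk a x).1, d)
              else 0) = ∑ d : AltState St, σ [] (s, Sum.inr (q, none)) (a, d) := by
            intro a
            rw [Finset.sum_ite_eq' Finset.univ
              ((Sum.inr (St.next q (M.label s), (none : Copy k)) : AltState St))
              (fun _ => ∑ d : AltState St, σ [] (s, Sum.inr (q, none)) (a, d))]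
            simp
          calc (∑ a : M.Act, ∑ x : AltState St,
              if x = (Sum.inr (St.next q (M.label s), (none : Copy k)) : AltState St) then
                ∑ d : AltState St, σ [] (s, Sum.inr (q, none)) (a, d)
              else 0)
              = ∑ a : M.Act, ∑ d : AltState St, σ [] (s, Sum.inr (q, none)) (a, d) :=
                Finset.sum_congr rfl fun a _ => hx a
            _ = ∑ c : GChoice M St, σ [] (s, Sum.inr (q, none)) c :=
                (Fintype.sum_prod_type _).symm
            _ = 1 := (hσ [] (s, Sum.inr (q, none))).1
        · intro c hc
          show (if ((s : M.S), Sum.inl q) = (s, Sum.inl q) then _ else _) = 0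
          rw [if_pos rfl]
          split
          · exact Finset.sum_eq_zero fun d _ =>
              (hσ [] (s, Sum.inr (q, none))).2.1 (c.1, d) hc
          · rfl
        · intro c _ hc
          show (if ((s : M.S), Sum.inl q) = (s, Sum.inl q) then _ else _) = 0
          rw [if_pos rfl]
          rw [if_neg]
          intro hce
          apply hc
          rw [hce]
          exact inr_none_mem_altNext_inl St q (M.label s)
      · refine ⟨?_, ?_, ?_⟩
        · show (∑ c : GChoice M St, if p = (s, Sum.inl q) then _ else dfltA M St [] p c) = 1
          simp only [if_neg hp]
          exact dfltA_sum M St [] p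
        · intro c hc
          show (if p = (s, Sum.inl q) then _ else _) = 0
          rw [if_neg hp]
          exact dfltA_zero₁ M St [] p c hc
        · intro c hpl hc
          show (if p = (s, Sum.inl q) then _ else _) = 0
          rw [if_neg hp]
          exact dfltA_zero₂ M St [] p c hpl hc
  | cons e t =>
      by_cases hC : CwA M St σ s q (e :: t) = 0
      · refine ⟨?_, ?_, ?_⟩
        · show (∑ c : GChoice M St, if CwA M St σ s q (e :: t) = 0 then
              dfltA M St (e :: t) p c else _) = 1
          simp only [if_pos hC]
          exact dfltA_sum M St (e :: t) p
        · intro c hc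
          show (if CwA M St σ s q (e :: t) = 0 then _ else _) = 0
          rw [if_pos hC]
          exact dfltA_zero₁ M St (e :: t) p c hc
        · intro c hpl hc
          show (if CwA M St σ s q (e :: t) = 0 then _ else _) = 0
          rw [if_pos hC]
          exact dfltA_zero₂ M St (e :: t) p c hpl hc
      · refine ⟨?_, ?_, ?_⟩
        · show (∑ c : GChoice M St, if CwA M St σ s q (e :: t) = 0 then
              dfltA M St (e :: t) p c
            else (∑ d : AltState St,
                wgtA M St σ s q d (e :: t) * σ (insd M St s q d (e :: t)) p c)
              / CwA M St σ s q (e :: t)) = 1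
          simp only [if_neg hC]
          rw [show (∑ c : GChoice M St, (∑ d : AltState St,
              wgtA M St σ s q d (e :: t) * σ (insd M St s q d (e :: t)) p c)
              / CwA M St σ s q (e :: t))
            = (∑ c : GChoice M St, ∑ d : AltState St,
              wgtA M St σ s q d (e :: t) * σ (insd M St s q d (e :: t)) p c)
              * (CwA M St σ s q (e :: t))⁻¹ from by
            rw [Finset.sum_mul]
            exact Finset.sum_congr rfl fun c _ => by rw [div_eq_mul_inv]]
          rw [Finset.sum_comm]
          have : (∑ d : AltState St, ∑ c : GChoice M St,
              wgtA M St σ s q d (e :: t) * σ (insd M St s q d (e :: t)) p c)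
              = CwA M St σ s q (e :: t) := by
            unfold CwA
            refine Finset.sum_congr rfl fun d _ => ?_
            rw [← Finset.mul_sum, (hσ (insd M St s q d (e :: t)) p).1, mul_one]
          rw [this]
          exact ENNReal.mul_inv_cancel hC (CwA_ne_top hσ s q (e :: t))
        · intro c hc
          show (if CwA M St σ s q (e :: t) = 0 then _ else _) = 0
          rw [if_neg hC]
          have : (∑ d : AltState St,
              wgtA M St σ s q d (e :: t) * σ (insd M St s q d (e :: t)) p c) = 0 :=
            Finset.sum_eq_zero fun d _ => by
              rw [(hσ (insd M St s q d (e :: t)) p).2.1 c hc, mul_zero]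
          rw [this, ENNReal.zero_div]
        · intro c hpl hc
          show (if CwA M St σ s q (e :: t) = 0 then _ else _) = 0
          rw [if_neg hC]
          have : (∑ d : AltState St,
              wgtA M St σ s q d (e :: t) * σ (insd M St s q d (e :: t)) p c) = 0 :=
            Finset.sum_eq_zero fun d _ => by
              rw [(hσ (insd M St s q d (e :: t)) p).2.2 c hpl hc, mul_zero]
          rw [this, ENNReal.zero_div]

lemma rejA_valid {M : FinMDP Alph} {St : DSA Alph k} {π : RejStrat M St}
    (hπ : RejStratValid M St π) (s : M.S) (q : St.Q) :
    RejStratValid M St (rejA M St π s q) := by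
  intro h p hp
  cases h with
  | nil =>
      constructor
      · show (∑ x : AltState St, if x =
            (Sum.inr (St.next (baseQ St p.2) (M.label p.1), (none : Copy k)) : AltState St)
            then (1 : ℝ≥0∞) else 0) = 1
        simp
      · intro x hx
        show (if x = _ then (1 : ℝ≥0∞) else 0) = 0
        rw [if_neg]
        intro hxe
        apply hx
        rw [hxe]
        cases hp2 : p.2 with
        | inl z => rw [hp2] at hp; simp at hp
        | inr y =>
            obtain ⟨z, c⟩ := y
            simp only [baseQ]
            exact inr_none_mem_altNext St z c (M.label p.1)
  | cons e t => exact hπ _ p hp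

lemma gamePrefixProb_zero {M : FinMDP Alph} {St : DSA Alph k} (σ : AccStrat M St)
    (π : RejStrat M St) (s0 : M.S) (x0 : AltState St) (r : ℕ → GPos M St × GChoice M St)
    (h : gamePrefixProb M St σ π s0 x0 r 0 = 0) (n : ℕ) :
    gamePrefixProb M St σ π s0 x0 r n = 0 := by
  induction n with
  | zero => exact h
  | succ m ih =>
      show gamePrefixProb M St σ π s0 x0 r m * _ * _ * _ = 0
      rw [ih, zero_mul, zero_mul, zero_mul]

end Case13A
section Case13A2

variable {Alph : Type} {k : ℕ}

lemma prefixProb_simA (M : FinMDP Alph) (St : DSA Alph k) (σ : AccStrat M St)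
    (π' : RejStrat M St) (s : M.S) (q : St.Q) (hσ : AccStratValid M St σ)
    (ρ : ℕ → GPos M St × GChoice M St)
    (hsh1 : (ρ 0).1 = (s, Sum.inl q))
    (hsh2 : (ρ 0).2.2 = (Sum.inr (St.next q (M.label s), (none : Copy k)) : AltState St))
    (ρd : AltState St → ℕ → GPos M St × GChoice M St)
    (hρd : ∀ d m, ρd d m = if m = 0 then
      (((s, (Sum.inr (q, (none : Copy k)) : AltState St)) : GPos M St),
        (((ρ 0).2.1, d) : GChoice M St)) else ρ m)
    (n : ℕ) :
    gamePrefixProb M St (simA M St σ s q) π' s (Sum.inl q) ρ n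
      = ∑ d : AltState St,
          gamePrefixProb M St σ (rejA M St π' s q) s
            (Sum.inr (q, (none : Copy k))) (ρd d) n := by
  have hρd0 : ∀ d, ρd d 0 = (((s, (Sum.inr (q, (none : Copy k)) : AltState St)) : GPos M St),
      (((ρ 0).2.1, d) : GChoice M St)) := fun d => by rw [hρd]; simp
  have hρds : ∀ d m, ρd d (m + 1) = ρ (m + 1) := fun d m => by rw [hρd]; simp
  have hs1 : (ρ 0).1.1 = s := by rw [hsh1]
  suffices H : ∀ n : ℕ, ∃ K : ℝ≥0∞,
      gamePrefixProb M St (simA M St σ s q) π' s (Sum.inl q) ρ n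
        = CwA M St σ s q ((List.range (n + 1)).map ρ) * K ∧
      ∀ d, gamePrefixProb M St σ (rejA M St π' s q) s
          (Sum.inr (q, (none : Copy k))) (ρd d) n
        = wgtA M St σ s q d ((List.range (n + 1)).map ρ) * K by
    obtain ⟨K, h1, h2⟩ := H n
    rw [h1]
    unfold CwA
    rw [Finset.sum_mul]
    exact Finset.sum_congr rfl fun d _ => (h2 d).symm
  intro n
  induction n with
  | zero =>
      refine ⟨1, ?_, ?_⟩
      · simp only [gamePrefixProb]
        rw [if_pos hsh1]
        have hsimA : simA M St σ s q [] (ρ 0).1 (ρ 0).2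
            = ∑ d : AltState St, σ [] (s, Sum.inr (q, none)) ((ρ 0).2.1, d) := by
          show (if (ρ 0).1 = (s, Sum.inl q) then
              (if (ρ 0).2.2 = (Sum.inr (St.next q (M.label s), (none : Copy k)) : AltState St)
                then ∑ d : AltState St, σ [] (s, Sum.inr (q, none)) (((ρ 0).2).1, d) else 0)
              else dfltA M St [] (ρ 0).1 (ρ 0).2) = _
          rw [if_pos hsh1, if_pos hsh2]
        rw [hsimA, one_mul]
        have hl : (List.range 1).map ρ = [ρ 0] := by rw [map_range_succ_cons]; rfl
        rw [hl, mul_one]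
        refine Finset.sum_congr rfl fun d _ => ?_
        show σ [] (s, Sum.inr (q, none)) ((ρ 0).2.1, d)
          = prodAlong M St σ (insd M St s q d [ρ 0]) []
        simp [insd, prodAlong]
      · intro d
        simp only [gamePrefixProb]
        rw [hρd0 d]
        rw [if_pos rfl, one_mul]
        have hl : (List.range 1).map ρ = [ρ 0] := by rw [map_range_succ_cons]; rfl
        rw [hl, mul_one]
        show σ [] (s, Sum.inr (q, none)) ((ρ 0).2.1, d)
          = prodAlong M St σ (insd M St s q d [ρ 0]) []
        simp [insd, prodAlong]
  | succ n ih =>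
      obtain ⟨K, h1, h2⟩ := ih
      have hcons : (List.range (n + 1)).map ρ
          = ρ 0 :: (List.range n).map (fun j => ρ (j + 1)) := map_range_succ_cons ρ n
      have hsnoc : (List.range (n + 2)).map ρ = (List.range (n + 1)).map ρ ++ [ρ (n + 1)] := by
        rw [List.range_succ, List.map_append]
        rfl
      have hinsd_snoc : ∀ d, insd M St s q d ((List.range (n + 2)).map ρ)
          = insd M St s q d ((List.range (n + 1)).map ρ) ++ [ρ (n + 1)] := by
        intro d
        rw [hsnoc, hcons]
        simp [insd]
      have hwrec : ∀ d, wgtA M St σ s q d ((List.range (n + 2)).map ρ)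
          = wgtA M St σ s q d ((List.range (n + 1)).map ρ)
            * σ (insd M St s q d ((List.range (n + 1)).map ρ)) (ρ (n + 1)).1 (ρ (n + 1)).2 := by
        intro d
        unfold wgtA
        rw [hinsd_snoc d, prodAlong_snoc, List.nil_append]
      have hmapd : ∀ d, (List.range (n + 1)).map (ρd d)
          = insd M St s q d ((List.range (n + 1)).map ρ) := by
        intro d
        have hfun : (fun m => ρd d (m + 1)) = (fun j => ρ (j + 1)) :=
          funext fun j => hρds d j
        rw [map_range_succ_cons (ρd d) n, hfun, hρd0 d, hcons]
        rfl
      have hTd : ∀ d, M.T ((ρd d n).1.1) ((ρd d n).2.1) ((ρd d (n + 1)).1.1)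
          = M.T ((ρ n).1.1) ((ρ n).2.1) ((ρ (n + 1)).1.1) := by
        intro d
        cases n with
        | zero =>
            rw [hρd0 d, hρds d 0]
            show M.T s ((ρ 0).2.1) ((ρ 1).1.1) = _
            rw [hs1]
        | succ m => rw [hρds d m, hρds d (m + 1)]
      have hmidd : ∀ d,
          (if (ρd d n).1.2.isLeft then
            (if (ρd d n).2.2 = (ρd d (n + 1)).1.2 then (1 : ℝ≥0∞) else 0)
          else rejA M St π' s q ((List.range n).map (ρd d)) ((ρd d n).1) (((ρd d (n + 1)).1.2)))
          = (if (ρ n).1.2.isLeft then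
              (if (ρ n).2.2 = (ρ (n + 1)).1.2 then (1 : ℝ≥0∞) else 0)
            else π' ((List.range n).map ρ) ((ρ n).1) ((ρ (n + 1)).1.2)) := by
        intro d
        cases n with
        | zero =>
            rw [hρd0 d, hρds d 0]
            have hl2 : (ρ 0).1.2 = Sum.inl q := by rw [hsh1]
            rw [hl2]
            simp only [Sum.isLeft_inr, Sum.isLeft_inl, Bool.false_eq_true, if_false, if_true]
            show rejA M St π' s q [] ((s, (Sum.inr (q, (none : Copy k)) : AltState St)))
              ((ρ 1).1.2) = _
            show (if (ρ 1).1.2 = (Sum.inr (St.next (baseQ St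
                (Sum.inr (q, (none : Copy k)) : AltState St)) (M.label s), (none : Copy k))
                : AltState St) then (1 : ℝ≥0∞) else 0) = _
            rw [hsh2]
            simp only [baseQ]
            by_cases he : (ρ 1).1.2
              = (Sum.inr (St.next q (M.label s), (none : Copy k)) : AltState St)
            · simp [he]
            · simp [he, Ne.symm he]
        | succ m =>
            rw [hρds d m, hρds d (m + 1)]
            by_cases hleft : (ρ (m + 1)).1.2.isLeft
            · rw [if_pos hleft, if_pos hleft]
            · rw [if_neg hleft, if_neg hleft]
              have hfun : (fun j => ρd d (j + 1)) = (fun j => ρ (j + 1)) :=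
                funext fun j => hρds d j
              have hmapsmall : (List.range (m + 1)).map (ρd d)
                  = ρd d 0 :: (List.range m).map (fun j => ρ (j + 1)) := by
                rw [map_range_succ_cons, hfun]
              rw [hmapsmall, hρd0 d]
              show π' (((s, Sum.inl q), (((ρ 0).2.1,
                  (Sum.inr (St.next q (M.label s), (none : Copy k)) : AltState St))
                    : GChoice M St)) :: (List.range m).map (fun j => ρ (j + 1)))
                ((ρ (m + 1)).1) ((ρ (m + 2)).1.2) = _
              have hre : (((s, Sum.inl q) : GPos M St), (((ρ 0).2.1,
                  (Sum.inr (St.next q (M.label s), (none : Copy k)) : AltState St))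
                    : GChoice M St)) = ρ 0 := by
                have h2 : (((ρ 0).2.1,
                    (Sum.inr (St.next q (M.label s), (none : Copy k)) : AltState St))
                      : GChoice M St) = (ρ 0).2 := by rw [← hsh2]
                rw [← hsh1, h2]
              rw [hre, ← map_range_succ_cons]
      by_cases hC : CwA M St σ s q ((List.range (n + 1)).map ρ) = 0
      · have hw0 : ∀ d, wgtA M St σ s q d ((List.range (n + 1)).map ρ) = 0 := by
          intro d
          have hh := Finset.sum_eq_zero_iff.1 hC
          exact hh d (Finset.mem_univ d)
        have hC2 : CwA M St σ s q ((List.range (n + 2)).map ρ) = 0 := by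
          unfold CwA
          refine Finset.sum_eq_zero fun d _ => ?_
          rw [hwrec d, hw0 d, zero_mul]
        refine ⟨K, ?_, ?_⟩
        · simp only [gamePrefixProb]
          rw [h1, hC, zero_mul, zero_mul, zero_mul, zero_mul, hC2, zero_mul]
        · intro d
          simp only [gamePrefixProb]
          rw [h2 d, hw0 d, zero_mul, zero_mul, zero_mul, zero_mul, hwrec d, hw0 d,
            zero_mul, zero_mul]
      · refine ⟨K * (M.T ((ρ n).1.1) ((ρ n).2.1) ((ρ (n + 1)).1.1)
          * (if (ρ n).1.2.isLeft then
              (if (ρ n).2.2 = (ρ (n + 1)).1.2 then (1 : ℝ≥0∞) else 0)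
            else π' ((List.range n).map ρ) ((ρ n).1) ((ρ (n + 1)).1.2))), ?_, ?_⟩
        · simp only [gamePrefixProb]
          have hsimAfac : simA M St σ s q ((List.range (n + 1)).map ρ)
              ((ρ (n + 1)).1) ((ρ (n + 1)).2)
              = CwA M St σ s q ((List.range (n + 2)).map ρ)
                / CwA M St σ s q ((List.range (n + 1)).map ρ) := by
            conv_lhs => rw [hcons]
            show (if CwA M St σ s q (ρ 0 :: (List.range n).map (fun j => ρ (j + 1))) = 0 then
                dfltA M St _ _ _
              else (∑ d : AltState St,
                  wgtA M St σ s q d (ρ 0 :: (List.range n).map (fun j => ρ (j + 1)))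
                    * σ (insd M St s q d (ρ 0 :: (List.range n).map (fun j => ρ (j + 1))))
                      ((ρ (n + 1)).1) ((ρ (n + 1)).2))
                / CwA M St σ s q (ρ 0 :: (List.range n).map (fun j => ρ (j + 1)))) = _
            rw [← hcons]
            rw [if_neg hC]
            have hnum : (∑ d : AltState St,
                wgtA M St σ s q d ((List.range (n + 1)).map ρ)
                  * σ (insd M St s q d ((List.range (n + 1)).map ρ))
                    ((ρ (n + 1)).1) ((ρ (n + 1)).2))
                = CwA M St σ s q ((List.range (n + 2)).map ρ) := by
              unfold CwA
              exact Finset.sum_congr rfl fun d _ => (hwrec d).symm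
            rw [hnum]
          rw [h1, hsimAfac]
          set X := CwA M St σ s q ((List.range (n + 2)).map ρ)
            / CwA M St σ s q ((List.range (n + 1)).map ρ) with hX
          set C1 := CwA M St σ s q ((List.range (n + 1)).map ρ) with hC1
          set C2 := CwA M St σ s q ((List.range (n + 2)).map ρ) with hC2'
          set T1 := M.T ((ρ n).1.1) ((ρ n).2.1) ((ρ (n + 1)).1.1) with hT1
          set mid := (if (ρ n).1.2.isLeft then
              (if (ρ n).2.2 = (ρ (n + 1)).1.2 then (1 : ℝ≥0∞) else 0)
            else π' ((List.range n).map ρ) ((ρ n).1) ((ρ (n + 1)).1.2)) with hmid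
          calc C1 * K * T1 * mid * X = C1 * X * (K * (T1 * mid)) := by ring
            _ = C2 * (K * (T1 * mid)) := by
                rw [hX, hC1, hC2', ENNReal.mul_div_cancel hC (CwA_ne_top hσ s q _)]
        · intro d
          simp only [gamePrefixProb]
          rw [h2 d, hTd d, hmidd d, hρds d n, hmapd d, hwrec d]
          ring

end Case13A2
section Case13A3

variable {Alph : Type} {k : ℕ}

lemma caseA_le (St : DSA Alph k) (M : FinMDP Alph) (s : M.S) (q : St.Q) :
    gameValFrom M St s (Sum.inr (q, (none : Copy k))) ≤ gameValFrom M St s (Sum.inl q) := by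
  classical
  set x0 : AltState St := Sum.inr (q, (none : Copy k)) with hx0
  set tgt : AltState St := Sum.inr (St.next q (M.label s), (none : Copy k)) with htgt
  set gA : GPos M St × GChoice M St → GPos M St × GChoice M St :=
    fun e => ((e.1.1, Sum.inl q), (e.2.1, tgt)) with hgA
  apply gameValFrom_le_of_sim M St s x0 (Sum.inl q)
  intro σ hσ
  refine ⟨simA M St σ s q, simA_valid hσ s q, ?_⟩
  intro π' hπ'
  refine ⟨rejA M St π' s q, rejA_valid hπ' s q, ?_⟩
  intro μ hμ
  refine transfer_measure M St σ (simA M St σ s q) (rejA M St π' s q) π' s x0 (Sum.inl q)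
    (upd0 gA) (measurable_upd0 _) ?_ μ hμ ?_
  · intro r hr
    simp only [gameWinSet, Set.mem_setOf_eq] at hr ⊢
    refine (hr.diff (Set.finite_singleton 0)).mono ?_
    rintro j ⟨hj, hj0⟩
    simp only [Set.mem_setOf_eq, Set.mem_singleton_iff] at hj hj0 ⊢
    obtain ⟨m, rfl⟩ : ∃ m, j = m + 1 := ⟨j - 1, by omega⟩
    simpa [upd0] using hj
  · intro ρ n
    by_cases hsh : (ρ 0).1.2 = Sum.inl q ∧ (ρ 0).2.2 = tgt
    · have hpre : upd0 gA ⁻¹' {r' | ∀ i' ≤ n, r' i' = ρ i'}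
          = ⋃ xd : AltState St × AltState St,
              {r' | ∀ i' ≤ n, r' i' = (fun m => if m = 0 then
                (((ρ 0).1.1, xd.1), ((ρ 0).2.1, xd.2)) else ρ m) i'} := by
        ext r
        simp only [Set.mem_preimage, Set.mem_setOf_eq, Set.mem_iUnion]
        constructor
        · intro h
          refine ⟨((r 0).1.2, (r 0).2.2), ?_⟩
          intro i' hi'
          have hh := h i' hi'
          cases i' with
          | zero =>
              have h0 : gA (r 0) = ρ 0 := by simpa [upd0] using hh
              have e11 : (r 0).1.1 = (ρ 0).1.1 := by
                have := congrArg (fun z : GPos M St × GChoice M St => z.1.1) h0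
                simpa [hgA] using this
              have e21 : (r 0).2.1 = (ρ 0).2.1 := by
                have := congrArg (fun z : GPos M St × GChoice M St => z.2.1) h0
                simpa [hgA] using this
              show r 0 = (((ρ 0).1.1, (r 0).1.2), ((ρ 0).2.1, (r 0).2.2))
              rw [← e11, ← e21]
          | succ m => simpa [upd0] using hh
        · rintro ⟨xd, hmem⟩
          intro i' hi'
          have hh := hmem i' hi'
          cases i' with
          | zero =>
              show upd0 gA r 0 = ρ 0
              have h0 : r 0 = (((ρ 0).1.1, xd.1), ((ρ 0).2.1, xd.2)) := by simpa using hh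
              rw [show upd0 gA r 0 = gA (r 0) from by simp [upd0], h0]
              show (((ρ 0).1.1, Sum.inl q), ((ρ 0).2.1, tgt)) = ρ 0
              rw [← hsh.1, ← hsh.2]
          | succ m =>
              show upd0 gA r (m + 1) = ρ (m + 1)
              rw [show upd0 gA r (m + 1) = r (m + 1) from by simp [upd0]]
              simpa using hh
      rw [hpre]
      have hdisj : Pairwise (Function.onFun Disjoint
          (fun xd : AltState St × AltState St =>
            {r' : ℕ → GPos M St × GChoice M St | ∀ i' ≤ n, r' i' = (fun m => if m = 0 then
              (((ρ 0).1.1, xd.1), ((ρ 0).2.1, xd.2)) else ρ m) i'})) := by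
        intro a b hab
        simp only [Function.onFun]
        rw [Set.disjoint_left]
        intro r hra hrb
        have ha0 : r 0 = (((ρ 0).1.1, a.1), ((ρ 0).2.1, a.2)) := by
          simpa using hra 0 (Nat.zero_le n)
        have hb0 : r 0 = (((ρ 0).1.1, b.1), ((ρ 0).2.1, b.2)) := by
          simpa using hrb 0 (Nat.zero_le n)
        have hb0' := ha0.symm.trans hb0
        apply hab
        have h1 : a.1 = b.1 := by
          have := congrArg (fun z : GPos M St × GChoice M St => z.1.2) hb0'
          simpa using this
        have h2 : a.2 = b.2 := by
          have := congrArg (fun z : GPos M St × GChoice M St => z.2.2) hb0'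
          simpa using this
        exact Prod.ext_iff.2 ⟨h1, h2⟩
      rw [MeasureTheory.measure_iUnion hdisj (fun xd => measurableSet_cyl _ n)]
      rw [tsum_fintype]
      have hsum : (∑ xd : AltState St × AltState St,
          μ {r' | ∀ i' ≤ n, r' i' = (fun m => if m = 0 then
            (((ρ 0).1.1, xd.1), ((ρ 0).2.1, xd.2)) else ρ m) i'})
          = ∑ xd : AltState St × AltState St,
            gamePrefixProb M St σ (rejA M St π' s q) s x0 (fun m => if m = 0 then
              (((ρ 0).1.1, xd.1), ((ρ 0).2.1, xd.2)) else ρ m) n :=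
        Finset.sum_congr rfl fun xd _ => hμ.2 _ n
      rw [hsum]
      by_cases hs : (ρ 0).1.1 = s
      · rw [Fintype.sum_prod_type]
        rw [Finset.sum_eq_single_of_mem x0 (Finset.mem_univ x0)
          (fun x _ hx => Finset.sum_eq_zero fun d _ => by
            apply gamePrefixProb_zero
            show (if ((fun m => if m = 0 then
                (((ρ 0).1.1, (x, d).1), ((ρ 0).2.1, (x, d).2)) else ρ m) 0).1 = (s, x0)
              then (1 : ℝ≥0∞) else 0) * _ = 0
            rw [if_neg, zero_mul]
            intro hcontra
            apply hx
            have := congrArg (fun z : GPos M St => z.2) hcontra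
            simpa using this)]
        have hsh1 : (ρ 0).1 = (s, Sum.inl q) := Prod.ext_iff.2 ⟨hs, hsh.1⟩
        exact (prefixProb_simA M St σ π' s q hσ ρ hsh1 hsh.2
          (fun d m => if m = 0 then (((ρ 0).1.1, (x0, d).1), ((ρ 0).2.1, (x0, d).2)) else ρ m)
          (fun d m => by rw [hs]) n).symm
      · rw [Finset.sum_eq_zero fun xd _ => ?_]
        · symm
          apply gamePrefixProb_zero
          show (if (ρ 0).1 = (s, Sum.inl q) then (1 : ℝ≥0∞) else 0) * _ = 0
          rw [if_neg fun he => hs (by rw [he]), zero_mul]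
        · apply gamePrefixProb_zero
          show (if ((fun m => if m = 0 then
              (((ρ 0).1.1, xd.1), ((ρ 0).2.1, xd.2)) else ρ m) 0).1 = (s, x0)
            then (1 : ℝ≥0∞) else 0) * _ = 0
          rw [if_neg, zero_mul]
          intro hcontra
          apply hs
          have := congrArg (fun z : GPos M St => z.1) hcontra
          simpa using this
    · have hpre : upd0 gA ⁻¹' {r' | ∀ i' ≤ n, r' i' = ρ i'} = ∅ := by
        ext r
        simp only [Set.mem_preimage, Set.mem_setOf_eq, Set.mem_empty_iff_false, iff_false]
        intro h
        have h0 : gA (r 0) = ρ 0 := by simpa [upd0] using h 0 (Nat.zero_le n)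
        have e1 : (ρ 0).1.2 = Sum.inl q := by
          have := congrArg (fun z : GPos M St × GChoice M St => z.1.2) h0
          simpa [hgA] using this.symm
        have e2 : (ρ 0).2.2 = tgt := by
          have := congrArg (fun z : GPos M St × GChoice M St => z.2.2) h0
          simpa [hgA] using this.symm
        exact hsh ⟨e1, e2⟩
      rw [hpre, MeasureTheory.measure_empty]
      symm
      apply gamePrefixProb_zero
      by_cases hp1 : (ρ 0).1 = (s, Sum.inl q)
      · have e1 : (ρ 0).1.2 = Sum.inl q := by rw [hp1]
        have e2 : (ρ 0).2.2 ≠ tgt := fun he => hsh ⟨e1, he⟩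
        show (if (ρ 0).1 = (s, Sum.inl q) then (1 : ℝ≥0∞) else 0)
          * simA M St σ s q [] (ρ 0).1 (ρ 0).2 = 0
        have hz : simA M St σ s q [] (ρ 0).1 (ρ 0).2 = 0 := by
          show (if (ρ 0).1 = (s, Sum.inl q) then
            (if (ρ 0).2.2 = tgt then ∑ d : AltState St, σ [] (s, Sum.inr (q, none))
              (((ρ 0).2).1, d) else 0)
            else dfltA M St [] (ρ 0).1 (ρ 0).2) = 0
          rw [if_pos hp1, if_neg e2]
        rw [hz, mul_zero]
      · show (if (ρ 0).1 = (s, Sum.inl q) then (1 : ℝ≥0∞) else 0) * _ = 0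
        rw [if_neg hp1, zero_mul]

end Case13A3
/-- In the stochastic Büchi game `M × A(S)`, for every MDP
state `s` and every automaton state `q` of the deterministic Streett automaton
`S`, the acceptance player's value satisfies
`val(s, q) ≥ val(s, (q, 0)) ≥ val(s, (q, i))` for every pair index `i`. -/
theorem gameVal_copies_le (Alph : Type) (k : ℕ) (St : DSA Alph k)
    (M : FinMDP Alph) (s : M.S) (q : St.Q) :
    gameValFrom M St s (Sum.inr (q, (none : Copy k))) ≤
      gameValFrom M St s (Sum.inl q) ∧
    ∀ i : Fin k,
      gameValFrom M St s (Sum.inr (q, some i)) ≤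
        gameValFrom M St s (Sum.inr (q, (none : Copy k))) :=
  ⟨caseA_le St M s q, fun i => caseB_le St M s q i⟩

end GFM
end
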